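/- arXiv:1808.06176 — 5 statements merged into one kernel-verified Lean document; each statement's English description precedes it below -/
import Mathlib

section
/- Let X and Y be real Hilbert spaces, let W : X → Y be a bounded linear operator with adjoint W*, and suppose there is a constant C > 0 such that ‖f‖_X ≤ C ‖W f‖_Y for all f ∈ X. Fix g^δ ∈ Y and let f† be the unique minimizer of Φ(f) = ½ ‖W f − g^δ‖²_Y. Let 0 < γ < 2/‖W*W‖ and define the Landweber iteration by f_0 = 0 and f_{k+1} = f_k − γ W*(W f_k − g^δ). Then a := max(|1 − γ C⁻²|, |1 − γ ‖W‖²|) satisfies a < 1 and ‖f† − f_k‖_X ≤ a^k ‖f†‖_X for all k ∈ ℕ. -/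
open ContinuousLinearMap

local notation "⟪" x ", " y "⟫" => @inner ℝ _ _ x y

/-- Norm bound for a self-adjoint operator via its quadratic form. -/
lemma selfadj_norm_bound {X : Type*} [NormedAddCommGroup X] [InnerProductSpace ℝ X]
    (S : X →L[ℝ] X) (hS : ∀ x y : X, ⟪S x, y⟫ = ⟪x, S y⟫)
    (a : ℝ) (ha : 0 ≤ a) (hq : ∀ x : X, |⟪S x, x⟫| ≤ a * ‖x‖ ^ 2) :
    ∀ x : X, ‖S x‖ ≤ a * ‖x‖ := by
  have key : ∀ x y : X, ⟪S x, y⟫ ≤ (a / 2) * (‖x‖ ^ 2 + ‖y‖ ^ 2) := by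
    intro x y
    have h1 : ⟪S (x + y), x + y⟫ - ⟪S (x - y), x - y⟫ = 4 * ⟪S x, y⟫ := by
      have hsym : ⟪S y, x⟫ = ⟪S x, y⟫ := by
        rw [hS y x, real_inner_comm]
      simp only [map_add, map_sub, inner_add_left, inner_add_right,
        inner_sub_left, inner_sub_right]
      linarith [hsym]
    have h2 : 4 * ⟪S x, y⟫ ≤ a * ‖x + y‖ ^ 2 + a * ‖x - y‖ ^ 2 := by
      rw [← h1]
      have := abs_le.mp (hq (x + y))
      have := abs_le.mp (hq (x - y))
      linarith [this.1, this.2, (abs_le.mp (hq (x + y))).2,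
        neg_abs_le (⟪S (x - y), x - y⟫)]
    have h3 : ‖x + y‖ ^ 2 + ‖x - y‖ ^ 2 = 2 * (‖x‖ ^ 2 + ‖y‖ ^ 2) := by
      have := parallelogram_law_with_norm ℝ x y
      nlinarith [this]
    nlinarith [h2, h3]
  intro x
  rcases eq_or_ne (S x) 0 with h | h
  · simp [h]; positivity
  rcases eq_or_ne x 0 with rfl | hx
  · simp at h
  have hSx : (0:ℝ) < ‖S x‖ := norm_pos_iff.mpr h
  have hxn : (0:ℝ) < ‖x‖ := norm_pos_iff.mpr hx
  have := key x ((‖x‖ / ‖S x‖) • S x)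
  rw [real_inner_smul_right, real_inner_self_eq_norm_sq, norm_smul] at this
  simp only [Real.norm_eq_abs, abs_div, abs_of_pos hxn, abs_of_pos hSx] at this
  have h4 : ‖x‖ / ‖S x‖ * ‖S x‖ = ‖x‖ := by field_simp
  rw [h4] at this
  have h5 : ‖x‖ / ‖S x‖ * (‖S x‖ ^ 2) = ‖x‖ * ‖S x‖ := by
    field_simp
  rw [h5] at this
  have : ‖x‖ * ‖S x‖ ≤ a * ‖x‖ ^ 2 := by nlinarith
  nlinarith

set_option maxHeartbeats 1000000 in
/-- linear convergence of the Landweber iteration, well-posed case.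
Let `X, Y` be real Hilbert spaces, `W : X → Y` bounded linear with adjoint `W*`, and
suppose `‖f‖ ≤ C ‖W f‖` for all `f` (`C > 0`). Fix `g^δ ∈ Y`, let `f†` be the unique
minimizer of `Φ(f) = ½‖W f − g^δ‖²`, let `0 < γ < 2/‖W*W‖`, and define the Landweber
iteration `f_0 = 0`, `f_{k+1} = f_k − γ W*(W f_k − g^δ)`. Then
`a := max (|1 − γ C⁻²|) (|1 − γ ‖W‖²|)` satisfies `a < 1` and
`‖f† − f_k‖ ≤ a^k ‖f†‖` for all `k ∈ ℕ`. -/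
theorem stmt5
    {X Y : Type*}
    [NormedAddCommGroup X] [InnerProductSpace ℝ X] [CompleteSpace X]
    [NormedAddCommGroup Y] [InnerProductSpace ℝ Y] [CompleteSpace Y]
    (W : X →L[ℝ] Y)
    (C : ℝ) (hC : 0 < C)
    (hstab : ∀ f : X, ‖f‖ ≤ C * ‖W f‖)
    (gδ : Y) (fdag : X)
    (hmin : ∀ h : X, (1 / 2) * ‖W fdag - gδ‖ ^ 2 ≤ (1 / 2) * ‖W h - gδ‖ ^ 2)
    (γ : ℝ) (hγ0 : 0 < γ)
    (hγ : γ < 2 / ‖(ContinuousLinearMap.adjoint W).comp W‖)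
    (fs : ℕ → X) (hfs0 : fs 0 = 0)
    (hfs : ∀ k : ℕ,
      fs (k + 1) = fs k - γ • ContinuousLinearMap.adjoint W (W (fs k) - gδ)) :
    max |1 - γ * C⁻¹ ^ 2| |1 - γ * ‖W‖ ^ 2| < 1 ∧
      ∀ k : ℕ,
        ‖fdag - fs k‖ ≤ (max |1 - γ * C⁻¹ ^ 2| |1 - γ * ‖W‖ ^ 2|) ^ k * ‖fdag‖ := by
  set T := (ContinuousLinearMap.adjoint W).comp W with hT
  set m := C⁻¹ ^ 2 with hm
  set M := ‖W‖ ^ 2 with hMdef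
  set a := max |1 - γ * m| |1 - γ * M| with ha
  have hTnorm : ‖T‖ = ‖W‖ * ‖W‖ := ContinuousLinearMap.norm_adjoint_comp_self W
  have hTpos : 0 < ‖T‖ := by
    rcases eq_or_lt_of_le (norm_nonneg T) with h | h
    · exfalso; rw [← h] at hγ; simp at hγ; linarith
    · exact h
  have hWpos : 0 < ‖W‖ := by
    by_contra h
    push_neg at h
    have h0 : ‖W‖ = 0 := le_antisymm h (norm_nonneg W)
    rw [h0, mul_zero] at hTnorm
    linarith
  have hγM2 : γ * M < 2 := by
    have h2 : γ * ‖T‖ < 2 := by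
      rw [lt_div_iff₀ hTpos] at hγ; linarith
    have h3 : M = ‖T‖ := by rw [hTnorm, hMdef]; ring
    linarith [h3 ▸ h2]
  have hCinv : 0 < C⁻¹ := inv_pos.mpr hC
  have hmpos : 0 < m := by positivity
  have hMpos : 0 < M := by positivity
  have hmM : m ≤ M := by
    have hWne : W ≠ 0 := by
      intro h; rw [h] at hWpos; simp at hWpos
    obtain ⟨x, hx⟩ : ∃ x, W x ≠ 0 := by
      by_contra h; push_neg at h
      exact hWne (ContinuousLinearMap.ext fun x => by simp [h x])
    have hxne : x ≠ 0 := fun h => hx (by simp [h])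
    have hxp : 0 < ‖x‖ := norm_pos_iff.mpr hxne
    have h1 := hstab x
    have h2 := W.le_opNorm x
    have h4 : 1 ≤ C * ‖W‖ := by
      nlinarith [mul_le_mul_of_nonneg_left h2 hC.le]
    have h5 : C⁻¹ ≤ ‖W‖ := by
      rw [inv_eq_one_div, div_le_iff₀ hC]; linarith
    rw [hm, hMdef]
    exact pow_le_pow_left₀ hCinv.le h5 2
  have hγm2 : γ * m < 2 := lt_of_le_of_lt (by nlinarith) hγM2
  have hγmpos : 0 < γ * m := by positivity
  have hγMpos : 0 < γ * M := by positivity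
  have ha1 : a < 1 := by
    rw [ha, max_lt_iff]
    constructor <;> rw [abs_lt] <;> constructor <;> linarith
  have ha0 : 0 ≤ a := le_trans (abs_nonneg _) (le_max_left _ _)
  refine ⟨ha1, ?_⟩
  set v := ContinuousLinearMap.adjoint W (W fdag - gδ) with hv
  have hv0 : v = 0 := by
    by_contra hvne
    have hvp : 0 < ‖v‖ := norm_pos_iff.mpr hvne
    have hWv : 0 < ‖W v‖ := by
      have := hstab v; nlinarith
    set t := ‖v‖ ^ 2 / ‖W v‖ ^ 2 with htdef
    have ht : 0 < t := by positivity
    have hkey := hmin (fdag - t • v)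
    have hexp : W (fdag - t • v) - gδ = (W fdag - gδ) - t • W v := by
      rw [map_sub, map_smul]; abel
    rw [hexp] at hkey
    have hns : ‖(W fdag - gδ) - t • W v‖ ^ 2
        = ‖W fdag - gδ‖ ^ 2 - 2 * ⟪W fdag - gδ, t • W v⟫ + ‖t • W v‖ ^ 2 := by
      rw [norm_sub_sq_real]
    have hip : ⟪W fdag - gδ, t • W v⟫ = t * ‖v‖ ^ 2 := by
      rw [real_inner_smul_right]
      have h6 : ⟪W fdag - gδ, W v⟫ = ⟪v, v⟫ := by
        rw [hv, ← ContinuousLinearMap.adjoint_inner_left]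
      rw [h6, real_inner_self_eq_norm_sq]
    have hnt : ‖t • W v‖ ^ 2 = t ^ 2 * ‖W v‖ ^ 2 := by
      rw [norm_smul, Real.norm_eq_abs, mul_pow, sq_abs]
    rw [hns, hip, hnt] at hkey
    have ht2 : t ^ 2 * ‖W v‖ ^ 2 = t * ‖v‖ ^ 2 := by
      rw [htdef]; field_simp
    nlinarith [hkey, ht2, mul_pos ht (by positivity : (0:ℝ) < ‖v‖ ^ 2)]
  set S : X →L[ℝ] X := ContinuousLinearMap.id ℝ X - γ • T with hSdef
  have hSapp : ∀ x : X, S x = x - γ • (ContinuousLinearMap.adjoint W (W x)) := by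
    intro x
    rw [hSdef, hT]
    simp only [ContinuousLinearMap.sub_apply, ContinuousLinearMap.smul_apply,
      ContinuousLinearMap.id_apply, ContinuousLinearMap.comp_apply]
  have hTip : ∀ x y : X, ⟪(ContinuousLinearMap.adjoint W (W x)), y⟫ = ⟪W x, W y⟫ := by
    intro x y; rw [ContinuousLinearMap.adjoint_inner_left]
  have hSsa : ∀ x y : X, ⟪S x, y⟫ = ⟪x, S y⟫ := by
    intro x y
    rw [hSapp, hSapp, inner_sub_left, inner_sub_right,
      real_inner_smul_left, real_inner_smul_right, hTip,
      ContinuousLinearMap.adjoint_inner_right]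
  have hq : ∀ x : X, |⟪S x, x⟫| ≤ a * ‖x‖ ^ 2 := by
    intro x
    have hform : ⟪S x, x⟫ = ‖x‖ ^ 2 - γ * ‖W x‖ ^ 2 := by
      rw [hSapp, inner_sub_left, real_inner_smul_left, hTip,
        real_inner_self_eq_norm_sq, real_inner_self_eq_norm_sq]
    have hlow : m * ‖x‖ ^ 2 ≤ ‖W x‖ ^ 2 := by
      have h1 : ‖x‖ / C ≤ ‖W x‖ :=
        (div_le_iff₀ hC).mpr (by linarith [hstab x, mul_comm C ‖W x‖ ▸ hstab x])
      have h2 : (‖x‖ / C) ^ 2 ≤ ‖W x‖ ^ 2 :=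
        pow_le_pow_left₀ (by positivity) h1 2
      have h3 : m * ‖x‖ ^ 2 = (‖x‖ / C) ^ 2 := by
        rw [hm, div_pow, inv_pow, inv_mul_eq_div]
      linarith [h2, h3]
    have hhigh : ‖W x‖ ^ 2 ≤ M * ‖x‖ ^ 2 := by
      have h2 := W.le_opNorm x
      rw [hMdef]; nlinarith [norm_nonneg (W x), norm_nonneg x]
    rw [hform, abs_le]
    constructor
    · have h3 : -a ≤ 1 - γ * M := by
        have h4 : |1 - γ * M| ≤ a := le_max_right _ _
        linarith [neg_abs_le (1 - γ * M)]
      nlinarith [sq_nonneg ‖x‖]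
    · have h3 : 1 - γ * m ≤ a :=
        le_trans (le_abs_self _) (le_max_left _ _)
      nlinarith [sq_nonneg ‖x‖]
  have hcontr := selfadj_norm_bound S hSsa a ha0 hq
  have herr : ∀ k : ℕ, fdag - fs (k + 1) = S (fdag - fs k) := by
    intro k
    rw [hfs k, hSapp]
    have h7 : ContinuousLinearMap.adjoint W (W (fs k) - gδ)
        = ContinuousLinearMap.adjoint W (W (fs k) - W fdag) + v := by
      rw [hv, ← map_add]; congr 1; abel
    rw [h7, hv0, add_zero]
    have h8 : ContinuousLinearMap.adjoint W (W (fs k) - W fdag)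
        = - ContinuousLinearMap.adjoint W (W (fdag - fs k)) := by
      rw [← map_neg]; congr 1; rw [map_sub]; abel
    rw [h8, smul_neg]
    abel
  intro k
  induction k with
  | zero => simp [hfs0]
  | succ n ih =>
    rw [herr n]
    calc ‖S (fdag - fs n)‖ ≤ a * ‖fdag - fs n‖ := hcontr _
      _ ≤ a * (a ^ n * ‖fdag‖) := mul_le_mul_of_nonneg_left ih ha0
      _ = a ^ (n + 1) * ‖fdag‖ := by ring
end

section
/- Let X and Y be real Hilbert spaces, let W : X → Y be a bounded linear operator with adjoint W*, and suppose there is a constant C > 0 such that ‖f‖_X ≤ C ‖W f‖_Y for all f ∈ X. Fix g^δ ∈ Y and let f† be the unique minimizer of Φ(f) = ½ ‖W f − g^δ‖²_Y. Define the steepest descent iteration by f_0 = 0 and, for k ≥ 0, s_k = W*(W f_k − g^δ), f_{k+1} = f_k − γ_k s_k with γ_k = ‖s_k‖²_X / ‖W s_k‖²_Y when s_k ≠ 0 and f_{k+1} = f_k when s_k = 0. Then there exist constants a ∈ [0, 1) and C'' ≥ 0 such that ‖f† − f_k‖_X ≤ C'' a^k ‖f†‖_X for all k ∈ ℕ. 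-/
set_option maxHeartbeats 1000000

open RealInnerProductSpace

/-- linear convergence of steepest descent, well-posed case.
Let `X, Y` be real Hilbert spaces, `W : X → Y` bounded linear with adjoint `W*`, and
suppose `‖f‖ ≤ C ‖W f‖` for all `f` (`C > 0`). Fix `g^δ ∈ Y`, let `f†` be the unique
minimizer of `Φ(f) = ½‖W f − g^δ‖²`, and define the steepest descent iteration by
`f_0 = 0`, `s_k = W*(W f_k − g^δ)`, `f_{k+1} = f_k − γ_k s_k` with
`γ_k = ‖s_k‖² / ‖W s_k‖²` when `s_k ≠ 0`, and `f_{k+1} = f_k` when `s_k = 0`. Then there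
are `a ∈ [0, 1)` and `C'' ≥ 0` with `‖f† − f_k‖ ≤ C'' a^k ‖f†‖` for all `k`. -/
theorem stmt6
    {X Y : Type*}
    [NormedAddCommGroup X] [InnerProductSpace ℝ X] [CompleteSpace X]
    [NormedAddCommGroup Y] [InnerProductSpace ℝ Y] [CompleteSpace Y]
    (W : X →L[ℝ] Y)
    (C : ℝ) (hC : 0 < C)
    (hstab : ∀ f : X, ‖f‖ ≤ C * ‖W f‖)
    (gδ : Y) (fdag : X)
    (hmin : ∀ h : X, (1 / 2) * ‖W fdag - gδ‖ ^ 2 ≤ (1 / 2) * ‖W h - gδ‖ ^ 2)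
    (fs : ℕ → X) (hfs0 : fs 0 = 0)
    (hfs : ∀ k : ℕ,
      (ContinuousLinearMap.adjoint W (W (fs k) - gδ) = 0 → fs (k + 1) = fs k) ∧
      (ContinuousLinearMap.adjoint W (W (fs k) - gδ) ≠ 0 →
        fs (k + 1) = fs k -
          (‖ContinuousLinearMap.adjoint W (W (fs k) - gδ)‖ ^ 2 /
            ‖W (ContinuousLinearMap.adjoint W (W (fs k) - gδ))‖ ^ 2) •
              ContinuousLinearMap.adjoint W (W (fs k) - gδ))) :
    ∃ a : ℝ, 0 ≤ a ∧ a < 1 ∧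
      ∃ C'' : ℝ, 0 ≤ C'' ∧ ∀ k : ℕ, ‖fdag - fs k‖ ≤ C'' * a ^ k * ‖fdag‖ := by
  set A := ContinuousLinearMap.adjoint W with hA
  clear_value A
  -- elements killed by W are zero
  have hWzero : ∀ u : X, W u = 0 → u = 0 := by
    intro u hu
    have h := hstab u
    rw [hu, norm_zero, mul_zero] at h
    exact norm_le_zero_iff.mp h
  -- expansion of the quadratic functional
  have expand : ∀ f v : X, (1/2) * ‖W (f + v) - gδ‖ ^ 2
      = (1/2) * ‖W f - gδ‖ ^ 2 + ⟪W f - gδ, W v⟫ + (1/2) * ‖W v‖ ^ 2 := by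
    intro f v
    have h1 : W (f + v) - gδ = (W f - gδ) + W v := by rw [map_add]; abel
    rw [h1, norm_add_sq_real]
    ring
  -- normal equation at the minimizer
  have normal : A (W fdag - gδ) = 0 := by
    by_contra hu
    have hWu : W (A (W fdag - gδ)) ≠ 0 := fun h => hu (hWzero _ h)
    have hL : (0:ℝ) < ‖W (A (W fdag - gδ))‖ ^ 2 := pow_pos (norm_pos_iff.mpr hWu) 2
    have hs : (0:ℝ) < ‖A (W fdag - gδ)‖ ^ 2 := pow_pos (norm_pos_iff.mpr hu) 2
    set u := A (W fdag - gδ) with hu_def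
    clear_value u
    set t := ‖u‖ ^ 2 / ‖W u‖ ^ 2 with ht_def
    clear_value t
    have hmin' := hmin (fdag + (-t) • u)
    rw [expand fdag ((-t) • u)] at hmin'
    have hip : ⟪W fdag - gδ, W ((-t) • u)⟫ = -t * ‖u‖ ^ 2 := by
      rw [map_smul, inner_smul_right, ← ContinuousLinearMap.adjoint_inner_left, ← hA,
        ← hu_def, real_inner_self_eq_norm_sq]
    have hnv : ‖W ((-t) • u)‖ ^ 2 = t ^ 2 * ‖W u‖ ^ 2 := by
      rw [map_smul, norm_smul]
      simp [mul_pow]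
    rw [hip, hnv] at hmin'
    have htL : t * ‖W u‖ ^ 2 = ‖u‖ ^ 2 := by
      rw [ht_def]; exact div_mul_cancel₀ _ (ne_of_gt hL)
    have ht0 : 0 < t := by rw [ht_def]; positivity
    have h7 : t ^ 2 * ‖W u‖ ^ 2 = t * ‖u‖ ^ 2 := by rw [sq, mul_assoc, htL]
    have h8 : 0 < t * ‖u‖ ^ 2 := mul_pos ht0 hs
    nlinarith [hmin', h7, h8]
  -- Φ(f) = Φ(f†) + ½‖W(f - f†)‖²
  have Phi_split : ∀ f : X, (1/2) * ‖W f - gδ‖ ^ 2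
      = (1/2) * ‖W fdag - gδ‖ ^ 2 + (1/2) * ‖W (f - fdag)‖ ^ 2 := by
    intro f
    have h0 : fdag + (f - fdag) = f := by abel
    have h1 := expand fdag (f - fdag)
    rw [h0] at h1
    have h2 : ⟪W fdag - gδ, W (f - fdag)⟫ = 0 := by
      rw [← ContinuousLinearMap.adjoint_inner_left, ← hA, normal, inner_zero_left]
    rw [h1, h2]; ring
  -- the gradient equals W*W applied to the error
  have sk_eq : ∀ f : X, A (W f - gδ) = A (W (f - fdag)) := by
    intro f
    have h1 : W f - gδ = W (f - fdag) + (W fdag - gδ) := by rw [map_sub]; abel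
    rw [h1, map_add, normal, add_zero]
  -- error norm squared as inner product with gradient
  have err_ip : ∀ f : X, ‖W (f - fdag)‖ ^ 2 = ⟪f - fdag, A (W (f - fdag))⟫ := by
    intro f
    rw [hA, ContinuousLinearMap.adjoint_inner_right, real_inner_self_eq_norm_sq]
  by_cases hWop : ‖W‖ = 0
  · -- degenerate case: everything is zero
    have hall : ∀ f : X, f = 0 := by
      intro f
      have h1 := hstab f
      have h2 : ‖W f‖ ≤ ‖W‖ * ‖f‖ := W.le_opNorm f
      rw [hWop, zero_mul] at h2
      have : ‖f‖ ≤ 0 := by nlinarith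
      exact norm_le_zero_iff.mp this
    refine ⟨0, le_refl 0, by norm_num, 0, le_refl 0, fun k => ?_⟩
    rw [hall fdag, hall (fs k)]
    simp
  · have hWpos : 0 < ‖W‖ := lt_of_le_of_ne (norm_nonneg _) (Ne.symm hWop)
    -- 1 ≤ C‖W‖
    have hCW : 1 ≤ C * ‖W‖ := by
      by_contra hcon
      push_neg at hcon
      have hWz : W = 0 := by
        ext f
        by_contra hf
        have hfne : f ≠ 0 := by
          intro h0; apply hf; rw [h0]; simp
        have hfpos : 0 < ‖f‖ := norm_pos_iff.mpr hfne
        have h1 := hstab f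
        have h2 : ‖W f‖ ≤ ‖W‖ * ‖f‖ := W.le_opNorm f
        nlinarith
      rw [hWz] at hWpos
      simp at hWpos
    have hM : (0:ℝ) < C ^ 2 * ‖W‖ ^ 2 := by positivity
    have hM1 : (1:ℝ) ≤ C ^ 2 * ‖W‖ ^ 2 := by nlinarith
    set q : ℝ := 1 - 1 / (C ^ 2 * ‖W‖ ^ 2) with hq_def
    clear_value q
    have hq0 : 0 ≤ q := by
      rw [hq_def, sub_nonneg, div_le_one hM]
      exact hM1
    have hq1 : q < 1 := by
      rw [hq_def]
      have : 0 < 1 / (C ^ 2 * ‖W‖ ^ 2) := by positivity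
      linarith
    -- one-step contraction
    have key : ∀ k : ℕ, ‖W (fs (k+1) - fdag)‖ ^ 2 ≤ q * ‖W (fs k - fdag)‖ ^ 2 := by
      intro k
      by_cases hsk : A (W (fs k) - gδ) = 0
      · have hstep := (hfs k).1 hsk
        have hd0 : ‖W (fs k - fdag)‖ ^ 2 = 0 := by
          rw [err_ip (fs k), ← sk_eq (fs k), hsk, inner_zero_right]
        rw [hstep, hd0, mul_zero]
      · have hstep := (hfs k).2 hsk
        set s := A (W (fs k) - gδ) with hs_def
        clear_value s
        have hWs : W s ≠ 0 := fun h => hsk (hWzero _ h)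
        have hLs : (0:ℝ) < ‖W s‖ ^ 2 := pow_pos (norm_pos_iff.mpr hWs) 2
        have hss : (0:ℝ) < ‖s‖ ^ 2 := pow_pos (norm_pos_iff.mpr hsk) 2
        set γ := ‖s‖ ^ 2 / ‖W s‖ ^ 2 with hγ_def
        clear_value γ
        -- Φ(f_{k+1}) = Φ(f_k) - ‖s‖⁴/(2‖Ws‖²)
        have hstep' : fs (k+1) = fs k + (-γ) • s := by
          rw [hstep, neg_smul, ← sub_eq_add_neg]
        have hexp := expand (fs k) ((-γ) • s)
        rw [← hstep'] at hexp
        have hip : ⟪W (fs k) - gδ, W ((-γ) • s)⟫ = -γ * ‖s‖ ^ 2 := by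
          rw [map_smul, inner_smul_right, ← ContinuousLinearMap.adjoint_inner_left, ← hA,
            ← hs_def, real_inner_self_eq_norm_sq]
        have hnv : ‖W ((-γ) • s)‖ ^ 2 = γ ^ 2 * ‖W s‖ ^ 2 := by
          rw [map_smul, norm_smul]
          simp [mul_pow]
        rw [hip, hnv] at hexp
        have hγL : γ * ‖W s‖ ^ 2 = ‖s‖ ^ 2 := by
          rw [hγ_def]; exact div_mul_cancel₀ _ (ne_of_gt hLs)
        -- express both sides via Phi_split
        have h1 := Phi_split (fs (k+1))
        have h2 := Phi_split (fs k)
        -- identity: ½dk1² = ½dk² - ½‖s‖⁴/‖Ws‖²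
        have hiden : (1/2) * ‖W (fs (k+1) - fdag)‖ ^ 2
            = (1/2) * ‖W (fs k - fdag)‖ ^ 2 - (1/2) * (‖s‖ ^ 2 * γ) := by
          have hx := hexp
          rw [h1, h2] at hx
          have hγ2 : γ ^ 2 * ‖W s‖ ^ 2 = γ * ‖s‖ ^ 2 := by rw [sq, mul_assoc, hγL]
          linarith [hx, hγ2]
        -- lower bounds
        have hWs_le : ‖W s‖ ≤ ‖W‖ * ‖s‖ := W.le_opNorm s
        have hia : ‖W (fs k - fdag)‖ ^ 2 = ⟪fs k - fdag, s⟫ := by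
          rw [err_ip (fs k), ← sk_eq (fs k), ← hs_def]
        have hib : ⟪fs k - fdag, s⟫ ≤ ‖fs k - fdag‖ * ‖s‖ := real_inner_le_norm _ _
        have hic : ‖fs k - fdag‖ ≤ C * ‖W (fs k - fdag)‖ := hstab _
        have hdk : ‖W (fs k - fdag)‖ ^ 2 ≤ C ^ 2 * ‖s‖ ^ 2 := by
          set dk := ‖W (fs k - fdag)‖ with hdk_def
          clear_value dk
          have hdk0 : 0 ≤ dk := hdk_def ▸ norm_nonneg _
          have : dk ^ 2 ≤ C * dk * ‖s‖ := by
            calc dk ^ 2 = ⟪fs k - fdag, s⟫ := hia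
            _ ≤ ‖fs k - fdag‖ * ‖s‖ := hib
            _ ≤ C * dk * ‖s‖ := mul_le_mul_of_nonneg_right hic (norm_nonneg s)
          nlinarith [norm_nonneg s, sq_nonneg (C * ‖s‖ - dk), hdk0, hC.le, this]
        -- combine: ‖s‖² * γ = ‖s‖⁴/‖Ws‖² ≥ dk²/(C²‖W‖²)
        have hP : ‖s‖ ^ 2 * γ * (C ^ 2 * ‖W‖ ^ 2) ≥ ‖W (fs k - fdag)‖ ^ 2 := by
          have hγWs : γ * ‖W s‖ ^ 2 = ‖s‖ ^ 2 := hγL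
          have hWs2 : ‖W s‖ ^ 2 ≤ ‖W‖ ^ 2 * ‖s‖ ^ 2 := by
            calc ‖W s‖ ^ 2 ≤ (‖W‖ * ‖s‖) ^ 2 := pow_le_pow_left₀ (norm_nonneg _) hWs_le 2
            _ = ‖W‖ ^ 2 * ‖s‖ ^ 2 := by ring
          have hγ0 : 0 ≤ γ := by rw [hγ_def]; positivity
          have h5 : ‖s‖ ^ 2 ≤ γ * (‖W‖ ^ 2 * ‖s‖ ^ 2) := by
            calc ‖s‖ ^ 2 = γ * ‖W s‖ ^ 2 := hγWs.symm
            _ ≤ γ * (‖W‖ ^ 2 * ‖s‖ ^ 2) := mul_le_mul_of_nonneg_left hWs2 hγ0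
          have h6 : C ^ 2 * ‖s‖ ^ 2 ≤ C ^ 2 * (γ * (‖W‖ ^ 2 * ‖s‖ ^ 2)) :=
            mul_le_mul_of_nonneg_left h5 (sq_nonneg C)
          linarith [hdk, h6]
        -- conclude
        have hfin : ‖W (fs (k+1) - fdag)‖ ^ 2
            = ‖W (fs k - fdag)‖ ^ 2 - ‖s‖ ^ 2 * γ := by linarith [hiden]
        rw [hfin, hq_def]
        have hdiv : ‖W (fs k - fdag)‖ ^ 2 / (C ^ 2 * ‖W‖ ^ 2) ≤ ‖s‖ ^ 2 * γ :=
          (div_le_iff₀ hM).mpr hP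
        have hexp2 : (1 - 1 / (C ^ 2 * ‖W‖ ^ 2)) * ‖W (fs k - fdag)‖ ^ 2
            = ‖W (fs k - fdag)‖ ^ 2 - ‖W (fs k - fdag)‖ ^ 2 / (C ^ 2 * ‖W‖ ^ 2) := by
          ring
        rw [hexp2]
        linarith
    -- iterate the contraction
    have hiter : ∀ k : ℕ, ‖W (fs k - fdag)‖ ^ 2 ≤ q ^ k * ‖W fdag‖ ^ 2 := by
      intro k
      induction k with
      | zero =>
        rw [hfs0, pow_zero, one_mul, zero_sub, map_neg, norm_neg]
      | succ n ih =>
        calc ‖W (fs (n+1) - fdag)‖ ^ 2 ≤ q * ‖W (fs n - fdag)‖ ^ 2 := key n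
        _ ≤ q * (q ^ n * ‖W fdag‖ ^ 2) := mul_le_mul_of_nonneg_left ih hq0
        _ = q ^ (n+1) * ‖W fdag‖ ^ 2 := by ring
    -- final bound
    refine ⟨Real.sqrt q, Real.sqrt_nonneg q, ?_, C * ‖W‖, by positivity, fun k => ?_⟩
    · rw [show (1:ℝ) = Real.sqrt 1 by simp]
      exact Real.sqrt_lt_sqrt hq0 hq1
    · have h1 : ‖fdag - fs k‖ = ‖fs k - fdag‖ := norm_sub_rev _ _
      have h2 : ‖fs k - fdag‖ ≤ C * ‖W (fs k - fdag)‖ := hstab _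
      have h3 : ‖W (fs k - fdag)‖ ≤ Real.sqrt q ^ k * ‖W fdag‖ := by
        have hrhs : (0:ℝ) ≤ Real.sqrt q ^ k * ‖W fdag‖ := by positivity
        have hsq : (Real.sqrt q ^ k * ‖W fdag‖) ^ 2 = q ^ k * ‖W fdag‖ ^ 2 := by
          rw [mul_pow, ← pow_mul, mul_comm k 2, pow_mul, Real.sq_sqrt hq0]
        refine le_of_pow_le_pow_left₀ two_ne_zero hrhs ?_
        rw [hsq]
        exact hiter k
      have h4 : ‖W fdag‖ ≤ ‖W‖ * ‖fdag‖ := W.le_opNorm fdag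
      calc ‖fdag - fs k‖ = ‖fs k - fdag‖ := h1
      _ ≤ C * ‖W (fs k - fdag)‖ := h2
      _ ≤ C * (Real.sqrt q ^ k * ‖W fdag‖) := mul_le_mul_of_nonneg_left h3 hC.le
      _ ≤ C * ‖W‖ * Real.sqrt q ^ k * ‖fdag‖ := by
          have hsk : (0:ℝ) ≤ Real.sqrt q ^ k := by positivity
          have h5 := mul_le_mul_of_nonneg_left h4 (mul_nonneg hC.le hsk)
          linarith [h5]
end

section
/- Let X and Y be real Hilbert spaces, let W : X → Y be a bounded linear operator with adjoint W* (W ≠ 0), let f ∈ X, let δ > 0 and g^δ ∈ Y with ‖g^δ − W f‖_Y ≤ δ, and let τ > 1 and 0 < γ < 2/‖W‖². Then the Landweber iterates f_0 = 0, f_{k+1} = f_k − γ W*(W f_k − g^δ) satisfy ‖W f_{k+1} − g^δ‖_Y ≤ τ δ for some k ∈ ℕ; consequently the Morozov stopping index k*(δ, g^δ) = min{ k ∈ ℕ : ‖W f_{k+1} − g^δ‖_Y ≤ τ δ } is well defined (finite). -/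
open Filter Topology
open scoped RealInnerProductSpace

set_option maxHeartbeats 1000000 in
/-- well-definedness of the Morozov stopping index for Landweber.
Let `X, Y` be real Hilbert spaces, `W : X → Y` a nonzero bounded linear operator with
adjoint `W*`, `f ∈ X`, `δ > 0` and `g^δ ∈ Y` with `‖g^δ − W f‖ ≤ δ`, and `τ > 1`,
`0 < γ < 2/‖W‖²`. Then the Landweber iterates `f_0 = 0`,
`f_{k+1} = f_k − γ W*(W f_k − g^δ)` satisfy `‖W f_{k+1} − g^δ‖ ≤ τ δ` for some `k ∈ ℕ`;
consequently the Morozov stopping index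
`k*(δ, g^δ) = min { k : ‖W f_{k+1} − g^δ‖ ≤ τ δ }` is well defined (finite). -/
theorem stmt10
    {X Y : Type*}
    [NormedAddCommGroup X] [InnerProductSpace ℝ X] [CompleteSpace X]
    [NormedAddCommGroup Y] [InnerProductSpace ℝ Y] [CompleteSpace Y]
    (W : X →L[ℝ] Y) (hW : W ≠ 0)
    (f : X) (δ : ℝ) (hδ : 0 < δ) (gδ : Y)
    (hnoise : ‖gδ - W f‖ ≤ δ)
    (τ : ℝ) (hτ : 1 < τ)
    (γ : ℝ) (hγ0 : 0 < γ) (hγ : γ < 2 / ‖W‖ ^ 2)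
    (fs : ℕ → X) (hfs0 : fs 0 = 0)
    (hfs : ∀ k : ℕ,
      fs (k + 1) = fs k - γ • ContinuousLinearMap.adjoint W (W (fs k) - gδ)) :
    ∃ k : ℕ, ‖W (fs (k + 1)) - gδ‖ ≤ τ * δ := by
  set Ws := ContinuousLinearMap.adjoint W with hWs
  set A : Y →L[ℝ] Y := W.comp Ws with hA
  set T : Y →L[ℝ] Y := ContinuousLinearMap.id ℝ Y - γ • A with hT
  have hWnorm : 0 < ‖W‖ := norm_pos_iff.mpr hW
  have hγW : γ * ‖W‖ ^ 2 < 2 := by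
    have := (lt_div_iff₀ (by positivity : (0:ℝ) < ‖W‖ ^ 2)).mp hγ
    linarith
  set c : ℝ := γ * (2 - γ * ‖W‖ ^ 2) with hc
  have hcpos : 0 < c := by
    apply mul_pos hγ0; linarith
  -- inner product identity for A
  have hAinner : ∀ u : Y, ⟪u, A u⟫ = ‖Ws u‖ ^ 2 := by
    intro u
    have : ⟪Ws u, Ws u⟫ = ⟪u, W (Ws u)⟫ := by
      rw [hWs, ContinuousLinearMap.adjoint_inner_left]
    simp only [hA, ContinuousLinearMap.comp_apply]
    rw [← this, real_inner_self_eq_norm_sq]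
  have hAnorm : ∀ u : Y, ‖A u‖ ≤ ‖W‖ * ‖Ws u‖ := fun u => W.le_opNorm (Ws u)
  -- key descent estimate
  have hkey : ∀ u : Y, ‖T u‖ ^ 2 ≤ ‖u‖ ^ 2 - c * ‖Ws u‖ ^ 2 := by
    intro u
    have hTu : T u = u - γ • A u := by simp [hT]
    rw [hTu, norm_sub_sq_real]
    have h1 : ⟪u, γ • A u⟫ = γ * ‖Ws u‖ ^ 2 := by
      rw [real_inner_smul_right, hAinner]
    have h2 : ‖γ • A u‖ ^ 2 ≤ γ ^ 2 * (‖W‖ ^ 2 * ‖Ws u‖ ^ 2) := by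
      rw [norm_smul]
      have := hAnorm u
      have h0 : (0:ℝ) ≤ ‖A u‖ := norm_nonneg _
      have h0' : (0:ℝ) ≤ ‖Ws u‖ := norm_nonneg _
      have habs : ‖γ‖ = γ := abs_of_pos hγ0
      rw [mul_pow, habs]
      have h5 : ‖A u‖ ^ 2 ≤ ‖W‖ ^ 2 * ‖Ws u‖ ^ 2 := by nlinarith
      exact mul_le_mul_of_nonneg_left h5 (sq_nonneg γ)
    rw [h1, hc]
    nlinarith [norm_nonneg (Ws u), sq_nonneg (‖Ws u‖)]
  have hcontr : ∀ u : Y, ‖T u‖ ≤ ‖u‖ := by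
    intro u
    have h2 : ‖T u‖ ^ 2 ≤ ‖u‖ ^ 2 := by
      have := hkey u
      have h3 : 0 ≤ c * ‖Ws u‖ ^ 2 := mul_nonneg hcpos.le (sq_nonneg _)
      linarith
    have h4 := Real.sqrt_le_sqrt h2
    rwa [Real.sqrt_sq (norm_nonneg _), Real.sqrt_sq (norm_nonneg _)] at h4
  -- T is symmetric
  have hsymm : ∀ u v : Y, ⟪T u, v⟫ = ⟪u, T v⟫ := by
    intro u v
    have h1 : ⟪A u, v⟫ = ⟪u, A v⟫ := by
      simp only [hA, ContinuousLinearMap.comp_apply, hWs]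
      rw [← ContinuousLinearMap.adjoint_inner_right W,
        ← ContinuousLinearMap.adjoint_inner_left W]
    simp only [hT, ContinuousLinearMap.sub_apply, ContinuousLinearMap.smul_apply,
      ContinuousLinearMap.id_apply, inner_sub_left, inner_sub_right,
      real_inner_smul_left, real_inner_smul_right, h1]
  have hpowsymm : ∀ x : Y, ∀ k j : ℕ, ⟪(T ^ k) x, (T ^ j) x⟫ = ⟪x, (T ^ (k + j)) x⟫ := by
    intro x k
    induction k with
    | zero => intro j; simp
    | succ m ih =>
      intro j
      have h1 : (T ^ (m + 1)) x = T ((T ^ m) x) := by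
        rw [pow_succ']; rfl
      have h2 : (T ^ (j + 1)) x = T ((T ^ j) x) := by
        rw [pow_succ']; rfl
      rw [h1, hsymm, ← h2, ih (j + 1)]
      ring_nf
  -- powers of T applied: contraction iterated
  have hpowcontr : ∀ (x : Y) (k : ℕ), ‖(T ^ k) x‖ ≤ ‖x‖ := by
    intro x k
    induction k with
    | zero => simp
    | succ m ih =>
      have h1 : (T ^ (m + 1)) x = T ((T ^ m) x) := by rw [pow_succ']; rfl
      rw [h1]; exact le_trans (hcontr _) ih
  -- residual formula
  have hres : ∀ k : ℕ, W (fs k) - gδ = -((T ^ k) gδ) := by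
    intro k
    induction k with
    | zero => simp [hfs0]
    | succ m ih =>
      have h1 : (T ^ (m + 1)) gδ = T ((T ^ m) gδ) := by rw [pow_succ']; rfl
      rw [hfs m, h1]
      have : W (fs m - γ • Ws (W (fs m) - gδ)) - gδ
          = (W (fs m) - gδ) - γ • A (W (fs m) - gδ) := by
        simp [hA, map_sub, map_smul, ContinuousLinearMap.comp_apply]
        abel
      rw [this, ih]
      simp only [hT, ContinuousLinearMap.sub_apply, ContinuousLinearMap.smul_apply,
        ContinuousLinearMap.id_apply, map_neg, smul_neg]
      abel
  -- summability of a k ^ 2 where a k = ‖Ws ((T^k) (W f))‖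
  set a : ℕ → ℝ := fun k => ‖Ws ((T ^ k) (W f))‖ with ha
  set b : ℕ → ℝ := fun k => ‖(T ^ k) (W f)‖ ^ 2 with hb
  have hstep : ∀ k, b (k + 1) + c * a k ^ 2 ≤ b k := by
    intro k
    have h1 : (T ^ (k + 1)) (W f) = T ((T ^ k) (W f)) := by rw [pow_succ']; rfl
    have := hkey ((T ^ k) (W f))
    simp only [hb, ha, h1]
    linarith
  have hsum_le' : ∀ N, ∑ k ∈ Finset.range N, c * a k ^ 2 ≤ b 0 - b N := by
    intro N
    induction N with
    | zero => simp
    | succ M ih =>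
      rw [Finset.sum_range_succ]
      have := hstep M
      linarith
  have hsum_le : ∀ N, ∑ k ∈ Finset.range N, c * a k ^ 2 ≤ b 0 := by
    intro N
    have h0 : 0 ≤ b N := by simp only [hb]; positivity
    linarith [hsum_le' N]
  have hsummable : Summable (fun k => a k ^ 2) := by
    have : Summable (fun k => c * a k ^ 2) := by
      apply summable_of_sum_range_le (fun k => by positivity) hsum_le
    have h := this.mul_left c⁻¹
    simpa [← mul_assoc, inv_mul_cancel₀ hcpos.ne'] using h
  have ha2zero : Tendsto (fun k => a k ^ 2) atTop (𝓝 0) := hsummable.tendsto_atTop_zero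
  have hazero : Tendsto a atTop (𝓝 0) := by
    have h : Tendsto (fun k => Real.sqrt (a k ^ 2)) atTop (𝓝 (Real.sqrt 0)) :=
      (Real.continuous_sqrt.tendsto 0).comp ha2zero
    rw [Real.sqrt_zero] at h
    exact h.congr (fun k => Real.sqrt_sq (norm_nonneg _))
  -- a (2k) → 0
  have h2k : Tendsto (fun k : ℕ => 2 * k) atTop atTop := by
    apply tendsto_atTop_atTop.mpr
    intro n; exact ⟨n, fun m hm => le_trans hm (Nat.le_mul_of_pos_left m (by norm_num))⟩
  have ha2k : Tendsto (fun k => ‖f‖ * a (2 * k)) atTop (𝓝 0) := by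
    have := (hazero.comp h2k).const_mul ‖f‖
    simpa using this
  -- pick K
  set ε : ℝ := (τ - 1) * δ with hε
  have hεpos : 0 < ε := by apply mul_pos <;> linarith
  obtain ⟨K, hK⟩ := (ha2k.eventually_lt_const (by positivity : (0:ℝ) < ε ^ 2)).exists
  -- ‖(T^K)(Wf)‖ < ε
  have hbK : ‖(T ^ K) (W f)‖ ^ 2 < ε ^ 2 := by
    have h1 : ‖(T ^ K) (W f)‖ ^ 2 = ⟪W f, (T ^ (K + K)) (W f)⟫ := by
      rw [← real_inner_self_eq_norm_sq, hpowsymm]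
    have h2 : ⟪W f, (T ^ (K + K)) (W f)⟫ = ⟪f, Ws ((T ^ (K + K)) (W f))⟫ := by
      rw [hWs, ContinuousLinearMap.adjoint_inner_right]
    have h3 : ⟪f, Ws ((T ^ (K + K)) (W f))⟫ ≤ ‖f‖ * a (2 * K) := by
      have := real_inner_le_norm f (Ws ((T ^ (K + K)) (W f)))
      have heq : (2 * K) = K + K := two_mul K
      simp only [ha, heq]
      exact this
    calc ‖(T ^ K) (W f)‖ ^ 2 = ⟪f, Ws ((T ^ (K + K)) (W f))⟫ := by rw [h1, h2]
      _ ≤ ‖f‖ * a (2 * K) := h3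
      _ < ε ^ 2 := hK
  have hsK : ‖(T ^ K) (W f)‖ < ε := by
    have h4 := Real.sqrt_lt_sqrt (sq_nonneg ‖(T ^ K) (W f)‖) hbK
    rwa [Real.sqrt_sq (norm_nonneg _), Real.sqrt_sq hεpos.le] at h4
  -- conclude with k = K
  refine ⟨K, ?_⟩
  have hres' := hres (K + 1)
  have hdecomp : (T ^ (K + 1)) gδ = (T ^ (K + 1)) (W f) + (T ^ (K + 1)) (gδ - W f) := by
    have h := ((T ^ (K + 1)) : Y →L[ℝ] Y).map_add (W f) (gδ - W f)
    rw [← h]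
    congr 1
    abel
  have h1 : (T ^ (K + 1)) (W f) = T ((T ^ K) (W f)) := by rw [pow_succ']; rfl
  have hnpart : ‖(T ^ (K + 1)) (gδ - W f)‖ ≤ δ := le_trans (hpowcontr _ _) hnoise
  have hspart : ‖(T ^ (K + 1)) (W f)‖ ≤ ε := by
    rw [h1]; exact le_trans (hcontr _) hsK.le
  calc ‖W (fs (K + 1)) - gδ‖ = ‖(T ^ (K + 1)) gδ‖ := by rw [hres']; rw [norm_neg]
    _ ≤ ‖(T ^ (K + 1)) (W f)‖ + ‖(T ^ (K + 1)) (gδ - W f)‖ := by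
        rw [hdecomp]; exact norm_add_le _ _
    _ ≤ ε + δ := add_le_add hspart hnpart
    _ = τ * δ := by rw [hε]; ring
end

section
/- Let X and Y be real Hilbert spaces, let W : X → Y be a bounded injective linear operator with adjoint W* (W ≠ 0), let f ∈ X and g = W f, fix τ > 1 and 0 < γ < 1/‖W‖². For noise data g' ∈ Y and noise level δ > 0 with ‖g' − g‖_Y ≤ δ, let f_k(g') denote the Landweber iterates f_0 = 0, f_{k+1} = f_k − γ W*(W f_k − g'), and let k*(δ, g') = min{ k ∈ ℕ : ‖W f_{k+1}(g') − g'‖_Y ≤ τ δ }. If (δ_m) is a sequence of positive numbers converging to 0 and (g_m) ⊂ Y satisfies ‖g_m − W f‖_Y ≤ δ_m for every m, then ‖f_{k*(δ_m, g_m)}(g_m) − f‖_X → 0 as m → ∞. -/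
open scoped RealInnerProductSpace
open Filter

private lemma aux_sq_le_stmt11 {a c : ℝ} (ha : 0 ≤ a) (hc : 0 ≤ c) (h : a ^ 2 ≤ c ^ 2) :
    a ≤ c := by
  calc a = Real.sqrt (a ^ 2) := (Real.sqrt_sq ha).symm
    _ ≤ Real.sqrt (c ^ 2) := Real.sqrt_le_sqrt h
    _ = c := Real.sqrt_sq hc

set_option maxHeartbeats 1000000

/-- Landweber iteration with the discrepancy principle is a convergent
regularization method. Let `X, Y` be real Hilbert spaces, `W : X → Y` a nonzero bounded
injective linear operator with adjoint `W*`, `f ∈ X`, `g = W f`, `τ > 1`, `0 < γ < 1/‖W‖²`.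
For noisy data `g'` with noise level `δ > 0`, `‖g' − g‖ ≤ δ`, let `f_k(g')` be the Landweber
iterates `f_0 = 0`, `f_{k+1} = f_k − γ W*(W f_k − g')`, and let
`k*(δ, g') = min { k : ‖W f_{k+1}(g') − g'‖ ≤ τ δ }`. If `δ_m > 0`, `δ_m → 0`, and
`‖g_m − W f‖ ≤ δ_m` for all `m`, then `‖f_{k*(δ_m, g_m)}(g_m) − f‖ → 0` as `m → ∞`. -/
theorem stmt11
    {X Y : Type*}
    [NormedAddCommGroup X] [InnerProductSpace ℝ X] [CompleteSpace X]
    [NormedAddCommGroup Y] [InnerProductSpace ℝ Y] [CompleteSpace Y]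
    (W : X →L[ℝ] Y) (hW : W ≠ 0) (hinj : Function.Injective ⇑W)
    (f : X)
    (τ : ℝ) (hτ : 1 < τ)
    (γ : ℝ) (hγ0 : 0 < γ) (hγ : γ < 1 / ‖W‖ ^ 2)
    (F : Y → ℕ → X)
    (hF0 : ∀ g' : Y, F g' 0 = 0)
    (hFrec : ∀ (g' : Y) (k : ℕ),
      F g' (k + 1) = F g' k - γ • ContinuousLinearMap.adjoint W (W (F g' k) - g'))
    (kstar : ℝ → Y → ℕ)
    (hkstar : ∀ δ : ℝ, 0 < δ → ∀ g' : Y, ‖g' - W f‖ ≤ δ →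
      ‖W (F g' (kstar δ g' + 1)) - g'‖ ≤ τ * δ ∧
        ∀ j : ℕ, j < kstar δ g' → τ * δ < ‖W (F g' (j + 1)) - g'‖)
    (δm : ℕ → ℝ) (hδpos : ∀ m : ℕ, 0 < δm m)
    (hδ0 : Filter.Tendsto δm Filter.atTop (nhds 0))
    (gm : ℕ → Y) (hgm : ∀ m : ℕ, ‖gm m - W f‖ ≤ δm m) :
    Filter.Tendsto (fun m : ℕ => ‖F (gm m) (kstar (δm m) (gm m)) - f‖)
      Filter.atTop (nhds 0) := by
  -- ## basic facts about the operators
  have hWpos : (0:ℝ) < ‖W‖ := norm_pos_iff.mpr hW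
  have hW2pos : (0:ℝ) < ‖W‖ ^ 2 := pow_pos hWpos 2
  have hγW : γ * ‖W‖ ^ 2 < 1 := by
    have h := (lt_div_iff₀ hW2pos).mp hγ
    linarith
  set W' : Y →L[ℝ] X := ContinuousLinearMap.adjoint W with hW'def
  set T : X →L[ℝ] X := γ • (W'.comp W) with hTdef
  set A : X →L[ℝ] X := 1 - T with hAdef
  set B : Y →L[ℝ] Y := 1 - γ • (W.comp W') with hBdef
  set g : Y := W f with hgdef
  have hTx : ∀ x : X, T x = γ • W' (W x) := fun x => by
    rw [hTdef]; rfl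
  have hAx : ∀ x : X, A x = x - T x := fun x => by
    rw [hAdef]; rfl
  have hBy : ∀ y : Y, B y = y - γ • W (W' y) := fun y => by
    rw [hBdef]; rfl
  have hadj : ∀ (y : Y) (x : X), ⟪W' y, x⟫ = ⟪y, W x⟫ := fun y x =>
    ContinuousLinearMap.adjoint_inner_left W x y
  have icommX : ∀ u v : X, ⟪u, v⟫ = ⟪v, u⟫ := fun u v => real_inner_comm v u
  have icommY : ∀ u v : Y, ⟪u, v⟫ = ⟪v, u⟫ := fun u v => real_inner_comm v u
  have hadj' : ∀ (x : X) (y : Y), ⟪W x, y⟫ = ⟪x, W' y⟫ := fun x y => by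
    rw [icommY (W x) y, ← hadj y x, icommX (W' y) x]
  have hTinner : ∀ x y : X, ⟪T x, y⟫ = γ * ⟪W x, W y⟫ := fun x y => by
    rw [hTx, real_inner_smul_left, hadj]
  have hTself : ∀ x : X, ⟪T x, x⟫ = γ * ‖W x‖ ^ 2 := fun x => by
    rw [hTinner, real_inner_self_eq_norm_sq]
  have hTsym : ∀ x y : X, ⟪T x, y⟫ = ⟪x, T y⟫ := fun x y => by
    rw [hTinner x y, icommX x (T y), hTinner y x, icommY (W y) (W x)]
  have hAsym : ∀ x y : X, ⟪A x, y⟫ = ⟪x, A y⟫ := fun x y => by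
    rw [hAx, hAx, inner_sub_left, inner_sub_right, hTsym]
  have hTpos : ∀ x : X, 0 ≤ ⟪T x, x⟫ := fun x => by
    rw [hTself]; positivity
  have hApos : ∀ x : X, 0 ≤ ⟪A x, x⟫ := fun x => by
    have h1 : ‖W x‖ ≤ ‖W‖ * ‖x‖ := W.le_opNorm x
    have h2 : ‖W x‖ ^ 2 ≤ ‖W‖ ^ 2 * ‖x‖ ^ 2 := by nlinarith [norm_nonneg (W x), norm_nonneg x]
    have h3 : γ * ‖W x‖ ^ 2 ≤ (γ * ‖W‖ ^ 2) * ‖x‖ ^ 2 := by nlinarith [hγ0.le]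
    have h4 : (γ * ‖W‖ ^ 2) * ‖x‖ ^ 2 ≤ 1 * ‖x‖ ^ 2 :=
      mul_le_mul_of_nonneg_right hγW.le (sq_nonneg _)
    rw [hAx, inner_sub_left, real_inner_self_eq_norm_sq, hTself]
    linarith
  -- powers of A
  have hPsym : ∀ (n : ℕ) (x y : X), ⟪(A ^ n) x, y⟫ = ⟪x, (A ^ n) y⟫ := by
    intro n
    induction n with
    | zero => intro x y; simp
    | succ n ih =>
      intro x y
      have e1 : (A ^ (n+1)) x = (A ^ n) (A x) := by rw [pow_succ]; rfl
      have e2 : (A ^ (n+1)) y = A ((A ^ n) y) := by rw [pow_succ']; rfl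
      rw [e1, e2, ih (A x) y, hAsym]
  have hcommATv : ∀ x : X, A (T x) = T (A x) := fun x => by
    rw [hAx (T x), hAx x, map_sub]
  have hcommPow : ∀ (n : ℕ) (x : X), (A ^ n) (T x) = T ((A ^ n) x) := by
    intro n
    induction n with
    | zero => intro x; simp
    | succ n ih =>
      intro x
      have e1 : (A ^ (n+1)) (T x) = (A ^ n) (A (T x)) := by rw [pow_succ]; rfl
      have e2 : (A ^ (n+1)) x = (A ^ n) (A x) := by rw [pow_succ]; rfl
      rw [e1, hcommATv, ih (A x), e2]
  have hpow_pos : ∀ (n : ℕ) (x : X), 0 ≤ ⟪(A ^ n) x, x⟫ := by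
    intro n x
    rcases Nat.even_or_odd n with ⟨m, hm⟩ | ⟨m, hm⟩
    · subst hm
      have e : (A ^ (m + m)) x = (A ^ m) ((A ^ m) x) := by rw [pow_add]; rfl
      rw [e, hPsym]
      exact real_inner_self_nonneg
    · subst hm
      have e : (A ^ (2*m+1)) x = (A ^ m) (A ((A ^ m) x)) := by
        rw [show 2*m+1 = m + (1 + m) by omega, pow_add, pow_add, pow_one]; rfl
      rw [e, hPsym]
      exact hApos _
  have hATpos : ∀ u : X, 0 ≤ ⟪A (T u), u⟫ := by
    intro u
    have hdec : A (T u) = A (T (T u)) + A (A (T u)) := by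
      have h1 : T u = T (T u) + A (T u) := by rw [hAx (T u)]; abel
      calc A (T u) = A (T (T u) + A (T u)) := by rw [← h1]
        _ = A (T (T u)) + A (A (T u)) := map_add _ _ _
    have h1 : 0 ≤ ⟪A (T (T u)), u⟫ := by
      rw [hcommATv, hTsym]
      exact hApos (T u)
    have h2 : 0 ≤ ⟪A (A (T u)), u⟫ := by
      rw [hAsym, hcommATv]
      exact hTpos _
    rw [hdec, inner_add_left]
    linarith
  have hpowT_pos : ∀ (n : ℕ) (x : X), 0 ≤ ⟪(A ^ n) (T x), x⟫ := by
    intro n x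
    rcases Nat.even_or_odd n with ⟨m, hm⟩ | ⟨m, hm⟩
    · subst hm
      have e : (A ^ (m + m)) (T x) = (A ^ m) ((A ^ m) (T x)) := by rw [pow_add]; rfl
      rw [e, hPsym, hcommPow]
      exact hTpos _
    · subst hm
      have e : (A ^ (2*m+1)) (T x) = (A ^ m) (A ((A ^ m) (T x))) := by
        rw [show 2*m+1 = m + (1 + m) by omega, pow_add, pow_add, pow_one]; rfl
      rw [e, hPsym, hcommPow]
      exact hATpos _
  have hpowTT_pos : ∀ (n : ℕ) (x : X), 0 ≤ ⟪(A ^ n) (T (T x)), x⟫ := by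
    intro n x
    rcases Nat.even_or_odd n with ⟨m, hm⟩ | ⟨m, hm⟩
    · subst hm
      have e : (A ^ (m + m)) (T (T x)) = (A ^ m) ((A ^ m) (T (T x))) := by rw [pow_add]; rfl
      rw [e, hPsym, hcommPow, hcommPow, hTsym]
      exact real_inner_self_nonneg
    · subst hm
      have e : (A ^ (2*m+1)) (T (T x)) = (A ^ m) (A ((A ^ m) (T (T x)))) := by
        rw [show 2*m+1 = m + (1 + m) by omega, pow_add, pow_add, pow_one]; rfl
      rw [e, hPsym, hcommPow, hcommPow, hcommATv, hTsym]
      exact hApos _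
  -- ## the scalar sequences a and d
  set a : ℕ → ℝ := fun n => ⟪(A ^ n) f, f⟫ with hadef
  have haval : ∀ n : ℕ, a n = ⟪(A ^ n) f, f⟫ := fun n => rfl
  have hstep : ∀ (n : ℕ) (x y : X), ⟪(A ^ n) x, y⟫ - ⟪(A ^ (n+1)) x, y⟫ = ⟪(A ^ n) (T x), y⟫ := by
    intro n x y
    have e1 : (A ^ (n+1)) x = (A ^ n) (A x) := by rw [pow_succ]; rfl
    have e2 : x - A x = T x := by rw [hAx]; exact sub_sub_cancel x (T x)
    rw [e1, ← inner_sub_left, ← map_sub, e2]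
  have ha_nonneg : ∀ n, 0 ≤ a n := fun n => hpow_pos n f
  have ha_anti : Antitone a := by
    apply antitone_nat_of_succ_le
    intro n
    have h1 := hstep n f f
    have h2 := hpowT_pos n f
    rw [haval, haval]
    linarith
  set d : ℕ → ℝ := fun n => a n - a (n+1) with hddef
  have hdval : ∀ n : ℕ, d n = a n - a (n+1) := fun n => rfl
  have hd_eq : ∀ n : ℕ, d n = ⟪(A ^ n) (T f), f⟫ := fun n => hstep n f f
  have hd_nonneg : ∀ n, 0 ≤ d n := fun n => by rw [hd_eq]; exact hpowT_pos n f
  have hd_anti : Antitone d := by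
    apply antitone_nat_of_succ_le
    intro n
    have h1 : d n - d (n+1) = ⟪(A ^ n) (T (T f)), f⟫ := by
      rw [hd_eq n, hd_eq (n+1)]
      exact hstep n (T f) f
    have h2 := hpowTT_pos n f
    linarith
  have hbdd : BddBelow (Set.range a) := by
    refine ⟨0, ?_⟩
    rintro r ⟨n, rfl⟩
    exact ha_nonneg n
  have ha_lim : Tendsto a atTop (nhds (⨅ n, a n)) := tendsto_atTop_ciInf ha_anti hbdd
  set l : ℝ := ⨅ n, a n with hldef
  have hl_le : ∀ n, l ≤ a n := fun n => ciInf_le hbdd n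
  -- ## convergence of the exact iterates : A^k f → 0
  have hekk : ∀ k m : ℕ, ⟪(A ^ k) f, (A ^ m) f⟫ = a (k + m) := by
    intro k m
    have e : (A ^ (k+m)) f = (A ^ m) ((A ^ k) f) := by
      rw [show k+m = m+k from by omega, pow_add]; rfl
    rw [haval, e, hPsym m ((A ^ k) f) f]
  have hnorm2 : ∀ k m : ℕ, ‖(A ^ k) f - (A ^ m) f‖ ^ 2 = a (k+k) - 2 * a (k+m) + a (m+m) := by
    intro k m
    have nkk : ‖(A ^ k) f‖ ^ 2 = a (k+k) := by
      rw [← real_inner_self_eq_norm_sq]; exact hekk k k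
    have nmm : ‖(A ^ m) f‖ ^ 2 = a (m+m) := by
      rw [← real_inner_self_eq_norm_sq]; exact hekk m m
    rw [norm_sub_sq_real, nkk, nmm, hekk]
  have hcauchy : CauchySeq (fun k : ℕ => (A ^ k) f) := by
    rw [Metric.cauchySeq_iff']
    intro ε hε
    have h2n : Tendsto (fun n : ℕ => a (n + n)) atTop (nhds l) :=
      ha_lim.comp (tendsto_atTop_mono (fun n => Nat.le_add_left n n) tendsto_id)
    obtain ⟨N, hN⟩ := (Metric.tendsto_atTop.mp h2n) (ε ^ 2) (by positivity)
    refine ⟨N, fun n hn => ?_⟩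
    have hd1 : dist ((A ^ n) f) ((A ^ N) f) ^ 2 = a (n+n) - 2 * a (n+N) + a (N+N) := by
      rw [dist_eq_norm]; exact hnorm2 n N
    have hm1 : a (n+n) ≤ a (n+N) := ha_anti (by omega)
    have hm2 : l ≤ a (n+n) := hl_le _
    have hN' : a (N+N) - l < ε ^ 2 := by
      have h := hN N le_rfl
      rw [Real.dist_eq] at h
      have h0 : l ≤ a (N+N) := hl_le _
      rw [abs_of_nonneg (by linarith)] at h
      exact h
    have hlt : dist ((A ^ n) f) ((A ^ N) f) ^ 2 < ε ^ 2 := by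
      rw [hd1]; linarith
    exact lt_of_pow_lt_pow_left₀ 2 hε.le hlt
  obtain ⟨z, hz⟩ := cauchySeq_tendsto_of_complete hcauchy
  have hAz : A z = z := by
    have h1 : Tendsto (fun k : ℕ => (A ^ (k+1)) f) atTop (nhds z) :=
      hz.comp (tendsto_add_atTop_nat 1)
    have h2 : Tendsto (fun k : ℕ => A ((A ^ k) f)) atTop (nhds (A z)) :=
      (A.continuous.tendsto z).comp hz
    have he : (fun k : ℕ => (A ^ (k+1)) f) = fun k : ℕ => A ((A ^ k) f) := by
      funext k; rw [pow_succ']; rfl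
    rw [he] at h1
    exact tendsto_nhds_unique h2 h1
  have hz0 : z = 0 := by
    have hTz : T z = 0 := by
      have h1 := hAx z
      rw [hAz] at h1
      have h2 : z - T z = z := h1.symm
      exact sub_eq_self.mp h2
    have hWz : W z = 0 := by
      have h := hTself z
      rw [hTz, inner_zero_left] at h
      have h2 : ‖W z‖ ^ 2 = 0 := by
        rcases mul_eq_zero.mp h.symm with h3 | h3
        · exact absurd h3 hγ0.ne'
        · exact h3
      have h3 : ‖W z‖ = 0 := sq_eq_zero_iff.mp h2
      exact norm_eq_zero.mp h3
    exact hinj (by rw [hWz, map_zero])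
  rw [hz0] at hz
  have hφ : Tendsto (fun k : ℕ => ‖(A ^ k) f‖) atTop (nhds 0) := by
    simpa using hz.norm
  -- ## k * d (2k) → 0
  have hIcc : ∀ N n : ℕ, N ≤ n → ∑ j ∈ Finset.Icc N n, d j = a N - a (n+1) := by
    intro N n hNn
    induction n, hNn using Nat.le_induction with
    | base => rw [Finset.Icc_self, Finset.sum_singleton, hdval]
    | succ n hNn ih =>
      rw [Finset.sum_Icc_succ_top (by omega), ih, hdval]
      ring
  have hcard : ∀ N n : ℕ, N ≤ n → ((n:ℝ) - N + 1) * d n ≤ a N - a (n+1) := by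
    intro N n h
    have h1 : ∀ j ∈ Finset.Icc N n, d n ≤ d j := fun j hj =>
      hd_anti (Finset.mem_Icc.mp hj).2
    have h2 := Finset.card_nsmul_le_sum (Finset.Icc N n) d (d n) h1
    rw [Nat.card_Icc, nsmul_eq_mul] at h2
    rw [← hIcc N n h]
    have h3 : ((n + 1 - N : ℕ) : ℝ) = (n:ℝ) - N + 1 := by
      rw [Nat.cast_sub (by omega)]
      push_cast
      ring
    rw [h3] at h2
    exact h2
  have hkd : Tendsto (fun k : ℕ => (k:ℝ) * d (2*k)) atTop (nhds 0) := by
    rw [Metric.tendsto_atTop]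
    intro ε hε
    obtain ⟨N, hN⟩ := Metric.tendsto_atTop.mp ha_lim ε hε
    refine ⟨N, fun k hk => ?_⟩
    have h1 : N ≤ 2*k := by omega
    have h2 := hcard N (2*k) h1
    have h3 : a N - l < ε := by
      have h := hN N le_rfl
      rw [Real.dist_eq, abs_of_nonneg (by linarith [hl_le N])] at h
      exact h
    have h4 : l ≤ a (2*k+1) := hl_le _
    have h5 : 0 ≤ d (2*k) := hd_nonneg _
    have h6 : (k:ℝ) ≤ ((2*k : ℕ):ℝ) - (N:ℝ) + 1 := by
      push_cast
      have : (N:ℝ) ≤ (k:ℝ) := by exact_mod_cast hk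
      linarith
    have h7 : (k:ℝ) * d (2*k) ≤ (((2*k:ℕ):ℝ) - N + 1) * d (2*k) :=
      mul_le_mul_of_nonneg_right h6 h5
    rw [Real.dist_eq, sub_zero, abs_of_nonneg (by positivity)]
    calc (k:ℝ) * d (2*k) ≤ (((2*k:ℕ):ℝ) - N + 1) * d (2*k) := h7
      _ ≤ a N - a (2*k+1) := h2
      _ ≤ a N - l := by linarith
      _ < ε := h3
  -- ## facts about B
  have hW'norm : ∀ y : Y, ‖W' y‖ ≤ ‖W‖ * ‖y‖ := by
    intro y
    have h1 : ‖W'‖ = ‖W‖ := by rw [hW'def]; exact ContinuousLinearMap.adjoint.norm_map W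
    calc ‖W' y‖ ≤ ‖W'‖ * ‖y‖ := W'.le_opNorm y
      _ = ‖W‖ * ‖y‖ := by rw [h1]
  have hBinner : ∀ u v : Y, ⟪B u, v⟫ = ⟪u, v⟫ - γ * ⟪W' u, W' v⟫ := fun u v => by
    rw [hBy, inner_sub_left, real_inner_smul_left, hadj' (W' u) v]
  have hBself : ∀ y : Y, ⟪B y, y⟫ = ‖y‖ ^ 2 - γ * ‖W' y‖ ^ 2 := fun y => by
    rw [hBinner, real_inner_self_eq_norm_sq, real_inner_self_eq_norm_sq]
  have hBpos : ∀ y : Y, 0 ≤ ⟪B y, y⟫ := by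
    intro y
    have h1 : ‖W' y‖ ≤ ‖W‖ * ‖y‖ := hW'norm y
    have h2 : ‖W' y‖ ^ 2 ≤ ‖W‖ ^ 2 * ‖y‖ ^ 2 := by nlinarith [norm_nonneg (W' y), norm_nonneg y]
    have h3 : γ * ‖W' y‖ ^ 2 ≤ (γ * ‖W‖ ^ 2) * ‖y‖ ^ 2 := by nlinarith [hγ0.le]
    have h4 : (γ * ‖W‖ ^ 2) * ‖y‖ ^ 2 ≤ 1 * ‖y‖ ^ 2 :=
      mul_le_mul_of_nonneg_right hγW.le (sq_nonneg _)
    rw [hBself]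
    linarith
  have hBle : ∀ y : Y, ⟪B y, y⟫ ≤ ‖y‖ ^ 2 := by
    intro y
    rw [hBself]
    nlinarith [hγ0.le, sq_nonneg ‖W' y‖]
  have hBsym : ∀ u v : Y, ⟪B u, v⟫ = ⟪u, B v⟫ := fun u v => by
    rw [hBinner u v, icommY u (B v), hBinner v u, icommY v u, icommX (W' v) (W' u)]
  have hBCS : ∀ u v : Y, ⟪B u, v⟫ ^ 2 ≤ ⟪B u, u⟫ * ⟪B v, v⟫ := by
    intro u v
    have key : ∀ t : ℝ, 0 ≤ ⟪B v, v⟫ * (t * t) + (2 * ⟪B u, v⟫) * t + ⟪B u, u⟫ := by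
      intro t
      have h0 : 0 ≤ ⟪B (u + t • v), u + t • v⟫ := hBpos _
      have e1 : B (u + t • v) = B u + t • B v := by rw [map_add, map_smul]
      have hvu : ⟪B v, u⟫ = ⟪B u, v⟫ := by rw [hBsym v u, icommY v (B u)]
      have hexp : ⟪B (u + t • v), u + t • v⟫
          = ⟪B v, v⟫ * (t * t) + (2 * ⟪B u, v⟫) * t + ⟪B u, u⟫ := by
        rw [e1, inner_add_left, inner_add_right, inner_add_right,
          real_inner_smul_left, real_inner_smul_left, real_inner_smul_right,
          real_inner_smul_right, hvu]
        ring
      rw [hexp] at h0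
      exact h0
    have hd := discrim_le_zero key
    rw [discrim] at hd
    linarith [hd]
  have hBcontr : ∀ y : Y, ‖B y‖ ≤ ‖y‖ := by
    intro y
    rcases eq_or_lt_of_le (norm_nonneg (B y)) with h0 | h0
    · rw [← h0]; exact norm_nonneg y
    · have h1 := hBCS y (B y)
      have h4 : ⟪B y, B y⟫ = ‖B y‖ ^ 2 := real_inner_self_eq_norm_sq _
      have h2 : ⟪B y, y⟫ ≤ ‖y‖ ^ 2 := hBle y
      have h3 : ⟪B (B y), B y⟫ ≤ ‖B y‖ ^ 2 := hBle (B y)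
      have h5 : 0 ≤ ⟪B y, y⟫ := hBpos y
      have h6 : 0 ≤ ⟪B (B y), B y⟫ := hBpos (B y)
      have h7 : ‖B y‖ ^ 2 * ‖B y‖ ^ 2 ≤ ‖y‖ ^ 2 * ‖B y‖ ^ 2 := by nlinarith
      have h8 : ‖B y‖ ^ 2 ≤ ‖y‖ ^ 2 :=
        le_of_mul_le_mul_right h7 (pow_pos h0 2)
      exact aux_sq_le_stmt11 (norm_nonneg _) (norm_nonneg _) h8
  have hBpow_contr : ∀ (k : ℕ) (y : Y), ‖(B ^ k) y‖ ≤ ‖y‖ := by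
    intro k
    induction k with
    | zero => intro y; simp
    | succ k ih =>
      intro y
      have e : (B ^ (k+1)) y = (B ^ k) (B y) := by rw [pow_succ]; rfl
      rw [e]
      exact le_trans (ih (B y)) (hBcontr y)
  have hBinj : ∀ y : Y, B y = 0 → y = 0 := by
    intro y h
    have h1 : ⟪B y, y⟫ = 0 := by rw [h]; exact inner_zero_left y
    rw [hBself] at h1
    have h2 : ‖W' y‖ ≤ ‖W‖ * ‖y‖ := hW'norm y
    have h3 : ‖W' y‖ ^ 2 ≤ ‖W‖ ^ 2 * ‖y‖ ^ 2 := by nlinarith [norm_nonneg (W' y), norm_nonneg y]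
    have h4 := mul_le_mul_of_nonneg_left h3 hγ0.le
    have h5 : ‖y‖ ^ 2 ≤ (γ * ‖W‖ ^ 2) * ‖y‖ ^ 2 := by nlinarith
    have h6 : ‖y‖ ^ 2 ≤ 0 := by nlinarith [hγW, sq_nonneg ‖y‖]
    have h7 : ‖y‖ ^ 2 = 0 := le_antisymm h6 (sq_nonneg _)
    have h8 : ‖y‖ = 0 := sq_eq_zero_iff.mp h7
    exact norm_eq_zero.mp h8
  -- ## residual identity
  have hres : ∀ (h : Y) (k : ℕ), W (F h k) - h = -((B ^ k) h) := by
    intro h k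
    induction k with
    | zero => rw [hF0]; simp
    | succ k ih =>
      rw [hFrec]
      have e1 : W (F h k - γ • W' (W (F h k) - h)) - h
          = B (W (F h k) - h) := by
        rw [map_sub, map_smul, hBy (W (F h k) - h), map_sub]
        abel
      rw [e1, ih, map_neg]
      have e2 : B ((B ^ k) h) = (B ^ (k+1)) h := by rw [pow_succ']; rfl
      rw [e2]
  -- ## intertwining
  have hBW : ∀ (k : ℕ) (x : X), (B ^ k) (W x) = W ((A ^ k) x) := by
    intro k
    induction k with
    | zero => intro x; simp
    | succ k ih =>
      intro x
      have e1 : (B ^ (k+1)) (W x) = (B ^ k) (B (W x)) := by rw [pow_succ]; rfl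
      have e2 : B (W x) = W (A x) := by
        rw [hBy, hAx, hTx, map_sub, map_smul]
      have e3 : (A ^ k) (A x) = (A ^ (k+1)) x := by rw [pow_succ]; rfl
      rw [e1, e2, ih (A x), e3]
  have haB : ∀ k : ℕ, γ * ‖(B ^ k) g‖ ^ 2 = d (2*k) := by
    intro k
    have e1 : (B ^ k) g = W ((A ^ k) f) := by rw [hgdef]; exact hBW k f
    have e2 : γ * ‖W ((A ^ k) f)‖ ^ 2 = ⟪T ((A ^ k) f), (A ^ k) f⟫ := (hTself _).symm
    have e3 : ⟪T ((A ^ k) f), (A ^ k) f⟫ = ⟪(A ^ k) (T ((A ^ k) f)), f⟫ :=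
      (hPsym k (T ((A ^ k) f)) f).symm
    have e4 : (A ^ k) (T ((A ^ k) f)) = (A ^ (2*k)) (T f) := by
      rw [← hcommPow k f, show 2*k = k + k from two_mul k, pow_add]; rfl
    have e5 : ⟪(A ^ (2*k)) (T f), f⟫ = d (2*k) := (hd_eq (2*k)).symm
    rw [e1, e2, e3, e4, e5]
  have hψ : Tendsto (fun k : ℕ => Real.sqrt (γ * k) * ‖(B ^ k) g‖) atTop (nhds 0) := by
    have heq : ∀ k : ℕ, Real.sqrt (γ * k) * ‖(B ^ k) g‖ = Real.sqrt ((k:ℝ) * d (2*k)) := by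
      intro k
      rw [← Real.sqrt_sq (norm_nonneg ((B ^ k) g)), ← Real.sqrt_mul (by positivity)]
      congr 1
      rw [← haB k]
      ring
    have h1 : Tendsto (fun k : ℕ => Real.sqrt ((k:ℝ) * d (2*k))) atTop (nhds 0) := by
      have h2 := (Real.continuous_sqrt.tendsto 0).comp hkd
      simpa only [Function.comp_def, Real.sqrt_zero] using h2
    simpa only [heq] using h1
  -- ## the sum operator S and the norm bound
  set S : ℕ → (X →L[ℝ] X) := fun k => ∑ j ∈ Finset.range k, A ^ j with hSdef
  have hSapp : ∀ (k : ℕ) (x : X), S k x = ∑ j ∈ Finset.range k, (A ^ j) x := by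
    intro k x
    rw [hSdef]
    exact ContinuousLinearMap.sum_apply _ _ _
  have hSsym : ∀ (k : ℕ) (x y : X), ⟪S k x, y⟫ = ⟪x, S k y⟫ := by
    intro k x y
    rw [hSapp, hSapp, sum_inner, inner_sum]
    exact Finset.sum_congr rfl fun j _ => hPsym j x y
  have hST : ∀ (k : ℕ) (x : X), S k (T x) = x - (A ^ k) x := by
    intro k x
    have hT1 : T = 1 - A := by rw [hAdef]; exact (sub_sub_cancel 1 T).symm
    have h1 : (S k) * (A - 1) = A ^ k - 1 := by rw [hSdef]; exact geom_sum_mul A k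
    have h2 : (S k) * T = 1 - A ^ k := by
      rw [hT1]
      rw [mul_one_sub]
      have h1' : S k * A - S k = A ^ k - 1 := by
        rw [← mul_sub_one]; exact h1
      rw [← neg_sub (S k * A) (S k), h1', neg_sub]
    calc S k (T x) = ((S k) * T) x := rfl
      _ = (1 - A ^ k) x := by rw [h2]
      _ = x - (A ^ k) x := rfl
  have hpow_le : ∀ (j : ℕ) (x : X), ⟪(A ^ j) x, x⟫ ≤ ⟪x, x⟫ := by
    intro j x
    have h2 : 0 ≤ ⟪S j (T x), x⟫ := by
      rw [hSapp, sum_inner]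
      exact Finset.sum_nonneg fun i _ => hpowT_pos i x
    have h4 : 0 ≤ ⟪x, x⟫ - ⟪(A ^ j) x, x⟫ := by
      rw [← inner_sub_left, ← hST j x]
      exact h2
    linarith
  have hCb : ∀ (k : ℕ) (z : Y), ‖γ • S k (W' z)‖ ≤ Real.sqrt (γ * k) * ‖z‖ := by
    intro k z
    set u : X := γ • S k (W' z) with hudef
    have hsn : 0 ≤ Real.sqrt (γ * k) * ‖z‖ := by positivity
    rcases eq_or_lt_of_le (norm_nonneg u) with h0 | h0
    · rw [← h0]; exact hsn
    · have key1 : ⟪u, u⟫ = γ * ⟪z, W (S k u)⟫ := by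
        calc ⟪u, u⟫ = γ * ⟪S k (W' z), u⟫ := by rw [hudef, real_inner_smul_left]
          _ = γ * ⟪W' z, S k u⟫ := by rw [hSsym]
          _ = γ * ⟪z, W (S k u)⟫ := by rw [hadj]
      have e6 : ⟪S k u, u⟫ ≤ (k:ℝ) * ⟪u, u⟫ := by
        rw [hSapp, sum_inner]
        calc (∑ j ∈ Finset.range k, ⟪(A ^ j) u, u⟫)
            ≤ ∑ _j ∈ Finset.range k, ⟪u, u⟫ :=
              Finset.sum_le_sum fun j _ => hpow_le j u
          _ = (k:ℝ) * ⟪u, u⟫ := by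
              rw [Finset.sum_const, Finset.card_range, nsmul_eq_mul]
      have e7 : 0 ≤ ⟪(A ^ k) (S k u), u⟫ := by
        have e : (A ^ k) (S k u) = ∑ j ∈ Finset.range k, (A ^ (k+j)) u := by
          rw [hSapp, map_sum]
          exact Finset.sum_congr rfl fun j _ => by rw [pow_add]; rfl
        rw [e, sum_inner]
        exact Finset.sum_nonneg fun j _ => hpow_pos _ u
      have e8 : ⟪T (S k u), S k u⟫ ≤ (k:ℝ) * ‖u‖ ^ 2 := by
        have e3 : ⟪T (S k u), S k u⟫ = ⟪S k (T (S k u)), u⟫ := (hSsym k (T (S k u)) u).symm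
        have e4 : S k (T (S k u)) = S k u - (A ^ k) (S k u) := hST k (S k u)
        have e5 : ⟪S k u - (A ^ k) (S k u), u⟫ = ⟪S k u, u⟫ - ⟪(A ^ k) (S k u), u⟫ :=
          inner_sub_left _ _ _
        have e9 : ⟪u, u⟫ = ‖u‖ ^ 2 := real_inner_self_eq_norm_sq u
        rw [e3, e4, e5, ← e9]
        linarith [e6, e7]
      have key2 : (γ * ‖W (S k u)‖) ^ 2 ≤ (γ * k) * ‖u‖ ^ 2 := by
        have e1 : (γ * ‖W (S k u)‖) ^ 2 = γ * (γ * ‖W (S k u)‖ ^ 2) := by ring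
        have e2 : γ * ‖W (S k u)‖ ^ 2 = ⟪T (S k u), S k u⟫ := (hTself _).symm
        rw [e1, e2]
        have h := mul_le_mul_of_nonneg_left e8 hγ0.le
        linarith [h]
      have key3 : γ * ‖W (S k u)‖ ≤ Real.sqrt (γ * k) * ‖u‖ := by
        have hh2 : (Real.sqrt (γ * k) * ‖u‖) ^ 2 = (γ * k) * ‖u‖ ^ 2 := by
          rw [mul_pow, Real.sq_sqrt (by positivity)]
        exact aux_sq_le_stmt11 (by positivity) (by positivity) (by rw [hh2]; exact key2)
      have final : ‖u‖ * ‖u‖ ≤ (Real.sqrt (γ * k) * ‖z‖) * ‖u‖ := by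
        have h1 : ⟪u, u⟫ ≤ ‖z‖ * (γ * ‖W (S k u)‖) := by
          rw [key1]
          have h2 := real_inner_le_norm z (W (S k u))
          have h3 := mul_le_mul_of_nonneg_left h2 hγ0.le
          linarith
        have h2 : ‖z‖ * (γ * ‖W (S k u)‖) ≤ ‖z‖ * (Real.sqrt (γ * k) * ‖u‖) :=
          mul_le_mul_of_nonneg_left key3 (norm_nonneg z)
        have h3 : ⟪u, u⟫ = ‖u‖ * ‖u‖ := real_inner_self_eq_norm_mul_norm u
        linarith
      exact le_of_mul_le_mul_right final h0
  -- ## iterate formula and error bound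
  have hiter : ∀ (h : Y) (k : ℕ), F h k = f - (A ^ k) f + γ • S k (W' (h - g)) := by
    intro h k
    induction k with
    | zero =>
      rw [hF0]
      have e1 : S 0 (W' (h - g)) = 0 := by rw [hSdef]; simp
      rw [e1]
      simp
    | succ k ih =>
      rw [hFrec, ih]
      have eS : S (k+1) (W' (h - g)) = W' (h - g) + A (S k (W' (h - g))) := by
        have e : S (k+1) = A * S k + 1 := by rw [hSdef]; exact geom_sum_succ
        rw [e]
        have : (A * S k + 1) (W' (h - g)) = A (S k (W' (h - g))) + W' (h - g) := rfl
        rw [this]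
        abel
      have epow : (A ^ (k+1)) f = A ((A ^ k) f) := by rw [pow_succ']; rfl
      rw [eS, epow]
      set p : X := (A ^ k) f with hpdef
      set q : X := S k (W' (h - g)) with hqdef
      rw [hAx p, hAx q, hTx p, hTx q]
      have eW : W (f - p + γ • q) - h = (g - h) - W p + γ • W q := by
        rw [map_add, map_sub, map_smul, ← hgdef]
        abel
      rw [eW]
      have eW' : W' ((g - h) - W p + γ • W q)
          = W' (g - h) - W' (W p) + γ • W' (W q) := by
        rw [map_add, map_sub, map_smul]
      rw [eW']
      have eneg : W' (h - g) = -(W' (g - h)) := by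
        rw [← map_neg]
        congr 1
        abel
      rw [eneg]
      module
  have herr : ∀ (h : Y) (k : ℕ),
      ‖F h k - f‖ ≤ ‖(A ^ k) f‖ + Real.sqrt (γ * k) * ‖h - g‖ := by
    intro h k
    rw [hiter]
    have e : f - (A ^ k) f + γ • S k (W' (h - g)) - f
        = -((A ^ k) f) + γ • S k (W' (h - g)) := by abel
    rw [e]
    calc ‖-((A ^ k) f) + γ • S k (W' (h - g))‖
        ≤ ‖-((A ^ k) f)‖ + ‖γ • S k (W' (h - g))‖ := norm_add_le _ _
      _ ≤ ‖(A ^ k) f‖ + Real.sqrt (γ * k) * ‖h - g‖ := by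
          rw [norm_neg]
          exact add_le_add le_rfl (hCb k (h - g))
  -- ## final assembly
  by_cases hf : f = 0
  · have hg0 : g = 0 := by rw [hgdef, hf, map_zero]
    have hk0 : ∀ m : ℕ, kstar (δm m) (gm m) = 0 := by
      intro m
      by_contra hne
      have hpos : 0 < kstar (δm m) (gm m) := Nat.pos_of_ne_zero hne
      have h2 := (hkstar (δm m) (hδpos m) (gm m) (hgm m)).2 0 hpos
      rw [hres (gm m) (0+1), norm_neg] at h2
      have h3 : ‖(B ^ (0+1)) (gm m)‖ ≤ δm m := by
        have e : (B ^ (0+1)) (gm m) = B (gm m) := by rw [pow_one]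
        rw [e]
        have h4 : ‖gm m‖ ≤ δm m := by
          have := hgm m
          rwa [hg0, sub_zero] at this
        exact le_trans (hBcontr (gm m)) h4
      have h5 : 1 * δm m < τ * δm m := mul_lt_mul_of_pos_right hτ (hδpos m)
      rw [one_mul] at h5
      linarith
    have hzero : ∀ m : ℕ, ‖F (gm m) (kstar (δm m) (gm m)) - f‖ = 0 := by
      intro m
      rw [hk0 m, hF0, hf, sub_zero, norm_zero]
    simp only [hzero]
    exact tendsto_const_nhds
  · have hgne : g ≠ 0 := by
      intro h0
      exact hf (hinj (by rw [← hgdef, h0, map_zero]))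
    have hBkg : ∀ k : ℕ, (B ^ k) g ≠ 0 := by
      intro k
      induction k with
      | zero => simpa using hgne
      | succ k ih =>
        intro h0
        apply ih
        apply hBinj
        have e : B ((B ^ k) g) = (B ^ (k+1)) g := by rw [pow_succ']; rfl
        rw [e]
        exact h0
    rw [Metric.tendsto_atTop]
    intro ε hε
    obtain ⟨K₀, hK₀⟩ := Metric.tendsto_atTop.mp hφ (ε/2) (by linarith)
    obtain ⟨K₁, hK₁⟩ := Metric.tendsto_atTop.mp hψ ((τ-1)*(ε/2)) (by nlinarith)
    set K : ℕ := max (max K₀ K₁) 1 with hKdef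
    have hK1 : 1 ≤ K := le_max_right _ _
    have hne : (Finset.Icc 1 K).Nonempty := ⟨1, Finset.mem_Icc.mpr ⟨le_rfl, hK1⟩⟩
    set c : ℝ := (Finset.Icc 1 K).inf' hne (fun i => ‖(B ^ i) g‖) with hcdef
    have hcpos : 0 < c := by
      rw [hcdef, Finset.lt_inf'_iff]
      exact fun i _ => norm_pos_iff.mpr (hBkg i)
    have hcle : ∀ i ∈ Finset.Icc 1 K, c ≤ ‖(B ^ i) g‖ := fun i hi =>
      Finset.inf'_le _ hi
    obtain ⟨M, hM⟩ := Metric.tendsto_atTop.mp hδ0 (c/(τ+1)) (by positivity)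
    refine ⟨M, fun m hm => ?_⟩
    set δ : ℝ := δm m with hδdef
    set g' : Y := gm m with hg'def
    set k : ℕ := kstar δ g' with hkdef2
    have hδp : 0 < δ := hδpos m
    have hg'close : ‖g' - g‖ ≤ δ := hgm m
    have hdm : δ < c/(τ+1) := by
      have h := hM m hm
      rwa [Real.dist_eq, sub_zero, abs_of_pos hδp] at h
    obtain ⟨hstop, hbefore⟩ := hkstar δ hδp g' hg'close
    have hstop' : ‖(B ^ (k+1)) g'‖ ≤ τ * δ := by
      rw [hres g' (k+1), norm_neg] at hstop
      exact hstop
    have hKk : K ≤ k := by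
      by_contra hlt
      push_neg at hlt
      have h1 : ‖(B ^ (k+1)) g‖ ≤ ‖(B ^ (k+1)) g'‖ + ‖(B ^ (k+1)) (g - g')‖ := by
        have e : (B ^ (k+1)) g = (B ^ (k+1)) g' + (B ^ (k+1)) (g - g') := by
          rw [← map_add]
          congr 1
          abel
        rw [e]
        exact norm_add_le _ _
      have h2 : ‖(B ^ (k+1)) (g - g')‖ ≤ δ := by
        refine le_trans (hBpow_contr (k+1) _) ?_
        rw [norm_sub_rev]
        exact hg'close
      have h3 : c ≤ ‖(B ^ (k+1)) g‖ :=
        hcle (k+1) (Finset.mem_Icc.mpr ⟨by omega, by omega⟩)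
      have h4 : δ * (τ+1) < c := (lt_div_iff₀ (by linarith)).mp hdm
      linarith
    have hk1 : 1 ≤ k := le_trans hK1 hKk
    have hbk : τ * δ < ‖(B ^ k) g'‖ := by
      have h := hbefore (k-1) (by omega)
      have e : (k-1) + 1 = k := by omega
      rw [e, hres g' k, norm_neg] at h
      exact h
    have hlow : (τ - 1) * δ < ‖(B ^ k) g‖ := by
      have h1 : ‖(B ^ k) g'‖ ≤ ‖(B ^ k) g‖ + ‖(B ^ k) (g' - g)‖ := by
        have e : (B ^ k) g' = (B ^ k) g + (B ^ k) (g' - g) := by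
          rw [← map_add]
          congr 1
          abel
        rw [e]
        exact norm_add_le _ _
      have h2 : ‖(B ^ k) (g' - g)‖ ≤ δ := le_trans (hBpow_contr k _) hg'close
      linarith
    have hb1 : ‖(A ^ k) f‖ < ε/2 := by
      have hKK : K₀ ≤ k := le_trans (le_trans (le_max_left _ _) (le_max_left _ _)) hKk
      have h := hK₀ k hKK
      rwa [Real.dist_eq, sub_zero, abs_of_nonneg (norm_nonneg _)] at h
    have hb2 : Real.sqrt (γ * k) * ‖g' - g‖ < ε/2 := by
      have hKK : K₁ ≤ k := le_trans (le_trans (le_max_right _ _) (le_max_left _ _)) hKk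
      have hψk : Real.sqrt (γ * k) * ‖(B ^ k) g‖ < (τ-1)*(ε/2) := by
        have h := hK₁ k hKK
        rwa [Real.dist_eq, sub_zero, abs_of_nonneg (by positivity)] at h
      have h1 : Real.sqrt (γ * k) * ‖g' - g‖ ≤ Real.sqrt (γ * k) * δ :=
        mul_le_mul_of_nonneg_left hg'close (Real.sqrt_nonneg _)
      have h2 : (τ - 1) * (Real.sqrt (γ * k) * δ) ≤ Real.sqrt (γ * k) * ‖(B ^ k) g‖ := by
        have h3 := mul_le_mul_of_nonneg_left hlow.le (Real.sqrt_nonneg (γ * k))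
        linarith
      have h4 : Real.sqrt (γ * k) * δ < ε/2 := by
        have hτ1 : (0:ℝ) < τ - 1 := by linarith
        have h5 : (τ - 1) * (Real.sqrt (γ * k) * δ) < (τ - 1) * (ε/2) :=
          lt_of_le_of_lt h2 hψk
        exact lt_of_mul_lt_mul_left h5 hτ1.le
      linarith
    rw [Real.dist_eq, sub_zero, abs_of_nonneg (norm_nonneg _)]
    calc ‖F g' k - f‖ ≤ ‖(A ^ k) f‖ + Real.sqrt (γ * k) * ‖g' - g‖ := herr g' k
      _ < ε/2 + ε/2 := by linarith
      _ = ε := by ring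
end

section
/- Let d ≥ 1, let c, a : ℝ^d → ℝ with c(x) ≠ 0 for every x, let c₀ ≠ 0 be a real constant, and let p, v, r, s : ℝ^d × ℝ → ℝ. Fix a point (x₀, t₀) and assume: (i) p(x₀, ·), v(x₀, ·), r(x₀, ·) are twice differentiable at t₀ and the spatial Laplacians Δp(·, t₀), Δv(·, t₀), Δr(·, t₀) exist at x₀; (ii) ∂²_t v(x₀, t) = (1 − c₀²/c(x₀)²) ∂²_t p(x₀, t) holds at t = t₀; (iii) ∂_t r(x₀, t) = c₀² a(x₀) p(x₀, t) holds for all t in a neighborhood of t₀. Define w = p − v + r. Then the damped wave equation c(x₀)⁻² ∂²_t p(x₀, t₀) + a(x₀) ∂_t p(x₀, t₀) − Δp(x₀, t₀) = s(x₀, t₀) holds if and only if ∂²_t w(x₀, t₀) − c₀² Δw(x₀, t₀) = c₀² s(x₀, t₀) + c₀² Δv(x₀, t₀) − c₀² Δr(x₀, t₀). -/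
open scoped BigOperators

/-- First partial derivative in the time variable of `u : ℝ^d × ℝ → ℝ`. -/
noncomputable def timeDeriv {d : ℕ} (u : EuclideanSpace ℝ (Fin d) × ℝ → ℝ)
    (x : EuclideanSpace ℝ (Fin d)) (t : ℝ) : ℝ :=
  deriv (fun τ => u (x, τ)) t

/-- Second partial derivative in the time variable of `u : ℝ^d × ℝ → ℝ`. -/
noncomputable def timeDeriv2 {d : ℕ} (u : EuclideanSpace ℝ (Fin d) × ℝ → ℝ)
    (x : EuclideanSpace ℝ (Fin d)) (t : ℝ) : ℝ :=
  deriv (fun τ => timeDeriv u x τ) t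

/-- The Laplacian (in the spatial variable) of `u : ℝ^d → ℝ`, as the sum of the
second partial derivatives along the coordinate directions. -/
noncomputable def spaceLap {d : ℕ} (u : EuclideanSpace ℝ (Fin d) → ℝ)
    (x : EuclideanSpace ℝ (Fin d)) : ℝ :=
  ∑ i : Fin d,
    fderiv ℝ (fun y => fderiv ℝ u y (EuclideanSpace.single i 1)) x
      (EuclideanSpace.single i 1)

/-- `u(x, ·)` is twice differentiable at `t`: it is differentiable in time near `t`
and its time derivative is differentiable at `t`. -/
def TwiceDiffAtTime {d : ℕ} (u : EuclideanSpace ℝ (Fin d) × ℝ → ℝ)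
    (x : EuclideanSpace ℝ (Fin d)) (t : ℝ) : Prop :=
  (∀ᶠ τ in nhds t, DifferentiableAt ℝ (fun σ => u (x, σ)) τ) ∧
    DifferentiableAt ℝ (deriv fun σ => u (x, σ)) t

/-- The Laplacian of `u : ℝ^d → ℝ` exists at `x`: `u` is differentiable near `x` and its
(total) derivative is differentiable at `x`. -/
def LapExistsAt {d : ℕ} (u : EuclideanSpace ℝ (Fin d) → ℝ)
    (x : EuclideanSpace ℝ (Fin d)) : Prop :=
  (∀ᶠ y in nhds x, DifferentiableAt ℝ u y) ∧ DifferentiableAt ℝ (fderiv ℝ u) x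

lemma lap_comb {d : ℕ} (p v r : EuclideanSpace ℝ (Fin d) → ℝ)
    (x₀ : EuclideanSpace ℝ (Fin d)) (hp : LapExistsAt p x₀) (hv : LapExistsAt v x₀)
    (hr : LapExistsAt r x₀) :
    spaceLap (fun z => p z - v z + r z) x₀ =
      spaceLap p x₀ - spaceLap v x₀ + spaceLap r x₀ := by
  unfold spaceLap
  rw [← Finset.sum_sub_distrib, ← Finset.sum_add_distrib]
  refine Finset.sum_congr rfl fun i _ => ?_
  set e := EuclideanSpace.single (𝕜 := ℝ) i (1 : ℝ) with he
  have heq : (fun y => fderiv ℝ (fun z => p z - v z + r z) y e) =ᶠ[nhds x₀]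
      (fun y => fderiv ℝ p y e - fderiv ℝ v y e + fderiv ℝ r y e) := by
    filter_upwards [hp.1, hv.1, hr.1] with y hpy hvy hry
    rw [fderiv_fun_add ((hpy.fun_sub hvy)) hry, fderiv_fun_sub hpy hvy]
    simp
  have dp : DifferentiableAt ℝ (fun y => fderiv ℝ p y e) x₀ :=
    hp.2.clm_apply (differentiableAt_const e)
  have dv : DifferentiableAt ℝ (fun y => fderiv ℝ v y e) x₀ :=
    hv.2.clm_apply (differentiableAt_const e)
  have dr : DifferentiableAt ℝ (fun y => fderiv ℝ r y e) x₀ :=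
    hr.2.clm_apply (differentiableAt_const e)
  rw [heq.fderiv_eq, fderiv_fun_add (dp.fun_sub dv) dr, fderiv_fun_sub dp dv]
  simp

lemma time2_comb {d : ℕ} (p v r : EuclideanSpace ℝ (Fin d) × ℝ → ℝ)
    (x₀ : EuclideanSpace ℝ (Fin d)) (t₀ : ℝ)
    (hp : TwiceDiffAtTime p x₀ t₀) (hv : TwiceDiffAtTime v x₀ t₀)
    (hr : TwiceDiffAtTime r x₀ t₀) :
    timeDeriv2 (fun q => p q - v q + r q) x₀ t₀ =
      timeDeriv2 p x₀ t₀ - timeDeriv2 v x₀ t₀ + timeDeriv2 r x₀ t₀ := by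
  have heq : (fun τ => timeDeriv (fun q => p q - v q + r q) x₀ τ) =ᶠ[nhds t₀]
      (fun τ => timeDeriv p x₀ τ - timeDeriv v x₀ τ + timeDeriv r x₀ τ) := by
    filter_upwards [hp.1, hv.1, hr.1] with τ hpτ hvτ hrτ
    simp only [timeDeriv]
    rw [deriv_fun_add (hpτ.fun_sub hvτ) hrτ, deriv_fun_sub hpτ hvτ]
  have dp : DifferentiableAt ℝ (fun τ => timeDeriv p x₀ τ) t₀ := hp.2
  have dv : DifferentiableAt ℝ (fun τ => timeDeriv v x₀ τ) t₀ := hv.2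
  have dr : DifferentiableAt ℝ (fun τ => timeDeriv r x₀ τ) t₀ := hr.2
  rw [timeDeriv2, heq.deriv_eq, deriv_fun_add (dp.fun_sub dv) dr, deriv_fun_sub dp dv]
  rfl

/-- equivalence between the damped wave equation and the auxiliary
constant-speed system underlying the k-space method. With `w = p − v + r`, under the
differentiability hypotheses (i), the relation (ii) `v_tt = (1 − c₀²/c²) p_tt` at `t₀`,
and the relation (iii) `r_t = c₀² a p` near `t₀`, the damped wave equation
`c⁻² p_tt + a p_t − Δp = s` at `(x₀, t₀)` holds if and only if
`w_tt − c₀² Δw = c₀² s + c₀² Δv − c₀² Δr` at `(x₀, t₀)`. -/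
theorem stmt15 {d : ℕ} (hd : 1 ≤ d)
    (c a : EuclideanSpace ℝ (Fin d) → ℝ) (hc : ∀ x, c x ≠ 0)
    (c₀ : ℝ) (hc₀ : c₀ ≠ 0)
    (p v r s : EuclideanSpace ℝ (Fin d) × ℝ → ℝ)
    (x₀ : EuclideanSpace ℝ (Fin d)) (t₀ : ℝ)
    (hp_t : TwiceDiffAtTime p x₀ t₀) (hv_t : TwiceDiffAtTime v x₀ t₀)
    (hr_t : TwiceDiffAtTime r x₀ t₀)
    (hp_x : LapExistsAt (fun z => p (z, t₀)) x₀)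
    (hv_x : LapExistsAt (fun z => v (z, t₀)) x₀)
    (hr_x : LapExistsAt (fun z => r (z, t₀)) x₀)
    (hv : timeDeriv2 v x₀ t₀ = (1 - c₀ ^ 2 / c x₀ ^ 2) * timeDeriv2 p x₀ t₀)
    (hr : ∀ᶠ t in nhds t₀, timeDeriv r x₀ t = c₀ ^ 2 * a x₀ * p (x₀, t))
    (w : EuclideanSpace ℝ (Fin d) × ℝ → ℝ)
    (hw : w = fun q => p q - v q + r q) :
    (c x₀ ^ 2)⁻¹ * timeDeriv2 p x₀ t₀ + a x₀ * timeDeriv p x₀ t₀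
        - spaceLap (fun z => p (z, t₀)) x₀ = s (x₀, t₀) ↔
      timeDeriv2 w x₀ t₀ - c₀ ^ 2 * spaceLap (fun z => w (z, t₀)) x₀ =
        c₀ ^ 2 * s (x₀, t₀) + c₀ ^ 2 * spaceLap (fun z => v (z, t₀)) x₀
          - c₀ ^ 2 * spaceLap (fun z => r (z, t₀)) x₀ := by
  have hC : c x₀ ^ 2 ≠ 0 := pow_ne_zero 2 (hc x₀)
  have h0 : c₀ ^ 2 ≠ 0 := pow_ne_zero 2 hc₀
  -- second time derivative of r
  have hrtt : timeDeriv2 r x₀ t₀ = c₀ ^ 2 * a x₀ * timeDeriv p x₀ t₀ := by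
    have : (fun t => timeDeriv r x₀ t) =ᶠ[nhds t₀]
        (fun t => c₀ ^ 2 * a x₀ * p (x₀, t)) := hr
    rw [timeDeriv2, this.deriv_eq, deriv_const_mul _ hp_t.1.self_of_nhds]
    rfl
  have hwt : timeDeriv2 w x₀ t₀ =
      timeDeriv2 p x₀ t₀ - timeDeriv2 v x₀ t₀ + timeDeriv2 r x₀ t₀ := by
    rw [hw]; exact time2_comb p v r x₀ t₀ hp_t hv_t hr_t
  have hwl : spaceLap (fun z => w (z, t₀)) x₀ =
      spaceLap (fun z => p (z, t₀)) x₀ - spaceLap (fun z => v (z, t₀)) x₀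
        + spaceLap (fun z => r (z, t₀)) x₀ := by
    rw [hw]; exact lap_comb _ _ _ x₀ hp_x hv_x hr_x
  rw [hwt, hwl, hv, hrtt]
  set P := timeDeriv2 p x₀ t₀
  set Pt := timeDeriv p x₀ t₀
  set Lp := spaceLap (fun z => p (z, t₀)) x₀
  set Lv := spaceLap (fun z => v (z, t₀)) x₀
  set Lr := spaceLap (fun z => r (z, t₀)) x₀
  have key : P - (1 - c₀ ^ 2 / c x₀ ^ 2) * P = c₀ ^ 2 * ((c x₀ ^ 2)⁻¹ * P) := by
    field_simp
    ring
  constructor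
  · intro h
    have h2 : c₀ ^ 2 * ((c x₀ ^ 2)⁻¹ * P + a x₀ * Pt - Lp) = c₀ ^ 2 * s (x₀, t₀) := by
      rw [h]
    nlinarith [key, h2]
  · intro h
    have h2 : c₀ ^ 2 * ((c x₀ ^ 2)⁻¹ * P + a x₀ * Pt - Lp) = c₀ ^ 2 * s (x₀, t₀) := by
      nlinarith [key, h]
    have := mul_left_cancel₀ h0 h2
    linarith [this]
end
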